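/- arXiv:1211.1890 — 12 statements merged into one kernel-verified Lean document; each statement's English description precedes it below -/
import Mathlib

section
/- Let G be a multiplicatively written abelian group, let φ : G → [0,∞) be a height on G, and let t ∈ (0,∞). Then the t-metric version φ_t of φ is a t-metric height on G, and φ_t(α) ≤ φ(α) for all α ∈ G. -/
open scoped BigOperators

/-- A (logarithmic) height on a multiplicatively written abelian group `G`:
a nonnegative real-valued function with `φ 1 = 0` and `φ α⁻¹ = φ α`. -/
def IsHeight {G : Type*} [CommGroup G] (φ : G → ℝ) : Prop :=
  (∀ α : G, 0 ≤ φ α) ∧ φ 1 = 0 ∧ ∀ α : G, φ α⁻¹ = φ α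

/-- A `t`-metric height for real `t ∈ (0,∞)`: a height satisfying the `t`-triangle
inequality `φ (αβ) ≤ (φ α ^ t + φ β ^ t) ^ (1/t)`. -/
def IsTMetricHeight {G : Type*} [CommGroup G] (φ : G → ℝ) (t : ℝ) : Prop :=
  IsHeight φ ∧ ∀ α β : G, φ (α * β) ≤ (φ α ^ t + φ β ^ t) ^ (1 / t)

/-- An `∞`-metric height: a height satisfying the strong triangle inequality
`φ (αβ) ≤ max (φ α) (φ β)`. -/
def IsInftyMetricHeight {G : Type*} [CommGroup G] (φ : G → ℝ) : Prop :=
  IsHeight φ ∧ ∀ α β : G, φ (α * β) ≤ max (φ α) (φ β)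

/-- The `t`-metric version of a height `φ`:
`φ_t(α) = inf{(∑ₙ φ(αₙ)^t)^(1/t) : α = ∏ₙ αₙ}`, the infimum over all ways of writing `α`
as a finite product of elements of `G`. -/
noncomputable def metricVersion {G : Type*} [CommGroup G] (φ : G → ℝ) (t : ℝ) (α : G) : ℝ :=
  sInf {x : ℝ | ∃ (N : ℕ) (f : Fin (N + 1) → G),
    α = ∏ i, f i ∧ x = (∑ i, φ (f i) ^ t) ^ (1 / t)}

/-- The `∞`-metric version of a height `φ`:
`φ_∞(α) = inf{max₁≤n≤N φ(αₙ) : α = ∏ₙ αₙ}`. -/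
noncomputable def inftyMetricVersion {G : Type*} [CommGroup G] (φ : G → ℝ) (α : G) : ℝ :=
  sInf {x : ℝ | ∃ (N : ℕ) (f : Fin (N + 1) → G),
    α = ∏ i, f i ∧ x = Finset.univ.sup' Finset.univ_nonempty (fun i => φ (f i))}

namespace MVAux

variable {G : Type*} [CommGroup G] (φ : G → ℝ) (t : ℝ)

/-- The set of `t`-th power sums over decompositions. -/
def Tset (α : G) : Set ℝ :=
  {s : ℝ | ∃ (N : ℕ) (f : Fin (N + 1) → G), α = ∏ i, f i ∧ s = ∑ i, φ (f i) ^ t}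

lemma Tset_nonempty (α : G) : (Tset φ t α).Nonempty :=
  ⟨φ α ^ t, 0, fun _ => α, by simp, by simp⟩

lemma Tset_bddBelow (hφ : ∀ α : G, 0 ≤ φ α) (α : G) : BddBelow (Tset φ t α) := by
  refine ⟨0, fun s hs => ?_⟩
  obtain ⟨N, f, -, rfl⟩ := hs
  exact Finset.sum_nonneg fun i _ => Real.rpow_nonneg (hφ _) t

lemma sInf_Tset_nonneg (hφ : ∀ α : G, 0 ≤ φ α) (α : G) : 0 ≤ sInf (Tset φ t α) :=
  le_csInf (Tset_nonempty φ t α) fun s hs => by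
    obtain ⟨N, f, -, rfl⟩ := hs
    exact Finset.sum_nonneg fun i _ => Real.rpow_nonneg (hφ _) t

lemma metricVersion_eq (ht : 0 < t) (hφ : ∀ α : G, 0 ≤ φ α) (α : G) :
    metricVersion φ t α = (sInf (Tset φ t α)) ^ (1 / t) := by
  have hmono : Monotone (fun x : ℝ => (max x 0) ^ (1 / t)) := by
    intro a b hab
    exact Real.rpow_le_rpow (le_max_right a 0) (max_le_max hab le_rfl)
      (le_of_lt (by positivity))
  have hcont : ContinuousAt (fun x : ℝ => (max x 0) ^ (1 / t)) (sInf (Tset φ t α)) :=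
    (Real.continuousAt_rpow_const _ _ (Or.inr (by positivity))).comp
      ((continuous_id.max continuous_const).continuousAt)
  have himg := hmono.map_csInf_of_continuousAt hcont (Tset_nonempty φ t α)
    (Tset_bddBelow φ t hφ α)
  have hset : (fun x : ℝ => (max x 0) ^ (1 / t)) '' (Tset φ t α) =
      {x : ℝ | ∃ (N : ℕ) (f : Fin (N + 1) → G),
        α = ∏ i, f i ∧ x = (∑ i, φ (f i) ^ t) ^ (1 / t)} := by
    ext x
    constructor
    · rintro ⟨s, ⟨N, f, hα, rfl⟩, rfl⟩
      refine ⟨N, f, hα, ?_⟩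
      dsimp only
      rw [max_eq_left (Finset.sum_nonneg fun i _ => Real.rpow_nonneg (hφ _) t)]
    · rintro ⟨N, f, hα, rfl⟩
      refine ⟨∑ i, φ (f i) ^ t, ⟨N, f, hα, rfl⟩, ?_⟩
      dsimp only
      rw [max_eq_left (Finset.sum_nonneg fun i _ => Real.rpow_nonneg (hφ _) t)]
  rw [metricVersion, ← hset, ← himg, max_eq_left (sInf_Tset_nonneg φ t hφ α)]

lemma Tset_add_mem {α β : G} {s r : ℝ} (hs : s ∈ Tset φ t α) (hr : r ∈ Tset φ t β) :
    s + r ∈ Tset φ t (α * β) := by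
  obtain ⟨N, f, hα, rfl⟩ := hs
  obtain ⟨M, g, hβ, rfl⟩ := hr
  have hc : N + M + 1 + 1 = (N + 1) + (M + 1) := by omega
  refine ⟨N + M + 1, fun i => Fin.append f g (Fin.cast hc i), ?_, ?_⟩
  · have h1 : ∏ i : Fin (N + M + 1 + 1), Fin.append f g (Fin.cast hc i)
        = ∏ j : Fin ((N + 1) + (M + 1)), Fin.append f g j :=
      Fintype.prod_equiv (finCongr hc) _ _ (fun i => rfl)
    rw [hα, hβ, h1]
    conv_rhs => rw [Fin.prod_univ_add]
    simp [Fin.append_left, Fin.append_right]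
  · have h1 : ∑ i : Fin (N + M + 1 + 1), φ (Fin.append f g (Fin.cast hc i)) ^ t
        = ∑ j : Fin ((N + 1) + (M + 1)), φ (Fin.append f g j) ^ t :=
      Fintype.sum_equiv (finCongr hc) _ _ (fun i => rfl)
    rw [h1]
    conv_rhs => rw [Fin.sum_univ_add]
    simp [Fin.append_left, Fin.append_right]

lemma sInf_Tset_subadd (hφ : ∀ α : G, 0 ≤ φ α) (α β : G) :
    sInf (Tset φ t (α * β)) ≤ sInf (Tset φ t α) + sInf (Tset φ t β) := by
  refine le_of_forall_pos_le_add fun ε hε => ?_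
  obtain ⟨s, hs, hs'⟩ := Real.lt_sInf_add_pos (Tset_nonempty φ t α) (half_pos hε)
  obtain ⟨r, hr, hr'⟩ := Real.lt_sInf_add_pos (Tset_nonempty φ t β) (half_pos hε)
  calc sInf (Tset φ t (α * β)) ≤ s + r :=
        csInf_le (Tset_bddBelow φ t hφ _) (Tset_add_mem φ t hs hr)
    _ ≤ sInf (Tset φ t α) + sInf (Tset φ t β) + ε := by linarith

lemma Tset_inv (hφ : ∀ α : G, φ α⁻¹ = φ α) (α : G) : Tset φ t α⁻¹ = Tset φ t α := by
  have key : ∀ γ : G, Tset φ t γ ⊆ Tset φ t γ⁻¹ := by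
    rintro γ s ⟨N, f, hγ, rfl⟩
    refine ⟨N, fun i => (f i)⁻¹, by rw [hγ]; simp, by simp [hφ]⟩
  apply subset_antisymm
  · have := key α⁻¹; rwa [inv_inv] at this
  · exact key α

end MVAux

/-- If `φ` is a height on `G` and `t ∈ (0,∞)`, then the `t`-metric version `φ_t` of `φ`
is a `t`-metric height on `G`, and `φ_t(α) ≤ φ(α)` for all `α ∈ G`. -/
theorem metricVersion_isTMetricHeight_le {G : Type*} [CommGroup G] (φ : G → ℝ)
    (hφ : IsHeight φ) (t : ℝ) (ht : 0 < t) :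
    IsTMetricHeight (metricVersion φ t) t ∧ ∀ α : G, metricVersion φ t α ≤ φ α := by
  obtain ⟨hnn, h1, hinv⟩ := hφ
  have heq := MVAux.metricVersion_eq φ t ht hnn
  have hInf0 := MVAux.sInf_Tset_nonneg φ t hnn
  have hmnn : ∀ α : G, 0 ≤ metricVersion φ t α := fun α => by
    rw [heq]; exact Real.rpow_nonneg (hInf0 α) _
  have hpow : ∀ α : G, (metricVersion φ t α) ^ t = sInf (MVAux.Tset φ t α) := fun α => by
    rw [heq, ← Real.rpow_mul (hInf0 α), one_div, inv_mul_cancel₀ ht.ne', Real.rpow_one]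
  refine ⟨⟨⟨hmnn, ?_, ?_⟩, ?_⟩, ?_⟩
  · -- metricVersion φ t 1 = 0
    have h0mem : (0 : ℝ) ∈ MVAux.Tset φ t 1 :=
      ⟨0, fun _ => 1, by simp, by simp [h1, Real.zero_rpow ht.ne']⟩
    have : sInf (MVAux.Tset φ t 1) = 0 :=
      le_antisymm (csInf_le (MVAux.Tset_bddBelow φ t hnn 1) h0mem) (hInf0 1)
    rw [heq, this, Real.zero_rpow (one_div_ne_zero ht.ne')]
  · -- inverse
    intro α
    rw [heq, heq, MVAux.Tset_inv φ t hinv]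
  · -- triangle inequality
    intro α β
    rw [heq (α * β), hpow α, hpow β]
    exact Real.rpow_le_rpow (hInf0 _) (MVAux.sInf_Tset_subadd φ t hnn α β)
      (by positivity)
  · -- metricVersion ≤ φ
    intro α
    have hmem : φ α ^ t ∈ MVAux.Tset φ t α := ⟨0, fun _ => α, by simp, by simp⟩
    have h2 : sInf (MVAux.Tset φ t α) ≤ φ α ^ t :=
      csInf_le (MVAux.Tset_bddBelow φ t hnn α) hmem
    calc metricVersion φ t α ≤ (φ α ^ t) ^ (1 / t) := by
          rw [heq]
          exact Real.rpow_le_rpow (hInf0 α) h2 (by positivity)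
      _ = φ α := by
          rw [← Real.rpow_mul (hnn α), mul_one_div_cancel ht.ne', Real.rpow_one]
end

section
/- Let G be a multiplicatively written abelian group, let φ : G → [0,∞) be a height on G, and let t ∈ (0,∞). If ψ : G → [0,∞) is any t-metric height on G with ψ(α) ≤ φ(α) for all α ∈ G, then ψ(α) ≤ φ_t(α) for all α ∈ G. In other words, φ_t is the largest t-metric height bounded above by φ. -/
open scoped BigOperators

/-- If `φ` is a height on `G`, `t ∈ (0,∞)`, and `ψ` is any `t`-metric height on `G` with
`ψ ≤ φ`, then `ψ ≤ φ_t`.  In other words, `φ_t` is the largest `t`-metric height bounded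
above by `φ`. -/
theorem le_metricVersion_of_tMetric_le {G : Type*} [CommGroup G] (φ ψ : G → ℝ)
    (hφ : IsHeight φ) (t : ℝ) (ht : 0 < t) (hψ : IsTMetricHeight ψ t)
    (hle : ∀ α : G, ψ α ≤ φ α) :
    ∀ α : G, ψ α ≤ metricVersion φ t α := by
  obtain ⟨⟨hψ0, hψ1, hψinv⟩, hψt⟩ := hψ
  have key : ∀ (n : ℕ) (f : Fin (n + 1) → G),
      ψ (∏ i, f i) ≤ (∑ i, ψ (f i) ^ t) ^ (1 / t) := by
    intro n
    induction n with
    | zero =>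
      intro f
      rw [Fin.prod_univ_one, Fin.sum_univ_one]
      rw [← Real.rpow_mul (hψ0 _), mul_one_div, div_self ht.ne', Real.rpow_one]
    | succ n ih =>
      intro f
      rw [Fin.prod_univ_succ, Fin.sum_univ_succ]
      have h1 := hψt (f 0) (∏ i : Fin (n + 1), f i.succ)
      have hS : 0 ≤ ∑ i : Fin (n + 1), ψ (f i.succ) ^ t :=
        Finset.sum_nonneg fun i _ => Real.rpow_nonneg (hψ0 _) t
      have h2 : ψ (∏ i : Fin (n + 1), f i.succ) ^ t ≤ ∑ i : Fin (n + 1), ψ (f i.succ) ^ t := by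
        calc ψ (∏ i : Fin (n + 1), f i.succ) ^ t
            ≤ ((∑ i : Fin (n + 1), ψ (f i.succ) ^ t) ^ (1 / t)) ^ t :=
              Real.rpow_le_rpow (hψ0 _) (ih _) ht.le
          _ = ∑ i : Fin (n + 1), ψ (f i.succ) ^ t := by
              rw [← Real.rpow_mul hS, one_div_mul_cancel ht.ne', Real.rpow_one]
      refine h1.trans ?_
      exact Real.rpow_le_rpow
        (add_nonneg (Real.rpow_nonneg (hψ0 _) t) (Real.rpow_nonneg (hψ0 _) t))
        (by linarith) (by positivity)
  intro α
  refine le_csInf ⟨(φ α ^ t) ^ (1 / t), 0, fun _ => α, by simp, by simp⟩ ?_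
  rintro x ⟨N, f, rfl, rfl⟩
  refine (key N f).trans (Real.rpow_le_rpow ?_ ?_ (by positivity))
  · exact Finset.sum_nonneg fun i _ => Real.rpow_nonneg (hψ0 _) t
  · exact Finset.sum_le_sum fun i _ => Real.rpow_le_rpow (hψ0 _) (hle _) ht.le
end

section
/- Let G be a multiplicatively written abelian group, let φ : G → [0,∞) be a height on G, and let t ∈ (0,∞). Then φ = φ_t if and only if φ is a t-metric height on G. In particular, (φ_t)_t = φ_t. -/
open scoped BigOperators

section aux
variable {G : Type*} [CommGroup G] (φ : G → ℝ) (t : ℝ)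

def mvSet (α : G) : Set ℝ :=
  {x : ℝ | ∃ (N : ℕ) (f : Fin (N + 1) → G),
    α = ∏ i, f i ∧ x = (∑ i, φ (f i) ^ t) ^ (1 / t)}

lemma metricVersion_def (α : G) : metricVersion φ t α = sInf (mvSet φ t α) := rfl

variable {φ t}

lemma mvSet_nonneg (hφ : IsHeight φ) {α : G} {x : ℝ} (hx : x ∈ mvSet φ t α) : 0 ≤ x := by
  obtain ⟨N, f, -, rfl⟩ := hx
  exact Real.rpow_nonneg (Finset.sum_nonneg fun i _ => Real.rpow_nonneg (hφ.1 _) _) _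

lemma self_mem_mvSet (ht : 0 < t) (hφ : IsHeight φ) (α : G) : φ α ∈ mvSet φ t α := by
  refine ⟨0, fun _ => α, by simp, ?_⟩
  rw [Fin.sum_univ_one, ← Real.rpow_mul (hφ.1 α), mul_one_div, div_self ht.ne',
    Real.rpow_one]

lemma mvSet_bddBelow (hφ : IsHeight φ) (α : G) : BddBelow (mvSet φ t α) :=
  ⟨0, fun _ hx => mvSet_nonneg hφ hx⟩

lemma mvSet_nonempty (ht : 0 < t) (hφ : IsHeight φ) (α : G) : (mvSet φ t α).Nonempty :=
  ⟨_, self_mem_mvSet ht hφ α⟩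

lemma mv_le_self (ht : 0 < t) (hφ : IsHeight φ) (α : G) : metricVersion φ t α ≤ φ α :=
  csInf_le (mvSet_bddBelow hφ α) (self_mem_mvSet ht hφ α)

lemma mv_nonneg (ht : 0 < t) (hφ : IsHeight φ) (α : G) : 0 ≤ metricVersion φ t α :=
  le_csInf (mvSet_nonempty ht hφ α) fun _ hx => mvSet_nonneg hφ hx

end aux

section aux2
variable {G : Type*} [CommGroup G] {φ : G → ℝ} {t : ℝ}

def pSet (φ : G → ℝ) (t : ℝ) (α : G) : Set ℝ :=
  {s : ℝ | ∃ (N : ℕ) (f : Fin (N + 1) → G), α = ∏ i, f i ∧ s = ∑ i, φ (f i) ^ t}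

lemma pSet_nonneg (hφ : IsHeight φ) {α : G} {s : ℝ} (hs : s ∈ pSet φ t α) : 0 ≤ s := by
  obtain ⟨N, f, -, rfl⟩ := hs
  exact Finset.sum_nonneg fun i _ => Real.rpow_nonneg (hφ.1 _) _

lemma pSet_nonempty (α : G) : (pSet φ t α).Nonempty :=
  ⟨_, 0, fun _ => α, by simp, by rw [Fin.sum_univ_one]⟩

lemma pSet_bddBelow (hφ : IsHeight φ) (α : G) : BddBelow (pSet φ t α) :=
  ⟨0, fun _ hs => pSet_nonneg hφ hs⟩

lemma sInf_pSet_nonneg (hφ : IsHeight φ) (α : G) : 0 ≤ sInf (pSet φ t α) :=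
  le_csInf (pSet_nonempty α) fun _ hs => pSet_nonneg hφ hs

lemma mem_mvSet_iff {α : G} {x : ℝ} :
    x ∈ mvSet φ t α ↔ ∃ s ∈ pSet φ t α, x = s ^ (1 / t) := by
  constructor
  · rintro ⟨N, f, hf, rfl⟩
    exact ⟨_, ⟨N, f, hf, rfl⟩, rfl⟩
  · rintro ⟨s, ⟨N, f, hf, rfl⟩, rfl⟩
    exact ⟨N, f, hf, rfl⟩

/-- `sInf pSet ^ (1/t)` is a lower bound of `mvSet`. -/
lemma rpow_sInf_pSet_le_mv (ht : 0 < t) (hφ : IsHeight φ) (α : G) :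
    (sInf (pSet φ t α)) ^ (1 / t) ≤ metricVersion φ t α := by
  refine le_csInf (mvSet_nonempty ht hφ α) ?_
  rintro x hx
  obtain ⟨s, hs, rfl⟩ := mem_mvSet_iff.1 hx
  exact Real.rpow_le_rpow (sInf_pSet_nonneg hφ α)
    (csInf_le (pSet_bddBelow hφ α) hs) (by positivity)

lemma sInf_pSet_le_mv_rpow (ht : 0 < t) (hφ : IsHeight φ) (α : G) :
    sInf (pSet φ t α) ≤ metricVersion φ t α ^ t := by
  have h := rpow_sInf_pSet_le_mv ht hφ α
  have h2 := Real.rpow_le_rpow (Real.rpow_nonneg (sInf_pSet_nonneg hφ α) _) h ht.le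
  rwa [← Real.rpow_mul (sInf_pSet_nonneg hφ α), one_div, inv_mul_cancel₀ ht.ne',
    Real.rpow_one] at h2

/-- concatenation: sums add -/
lemma add_mem_pSet {α β : G} {a b : ℝ} (ha : a ∈ pSet φ t α) (hb : b ∈ pSet φ t β) :
    a + b ∈ pSet φ t (α * β) := by
  obtain ⟨N, f, hf, rfl⟩ := ha
  obtain ⟨M, g, hg, rfl⟩ := hb
  have hc : N + M + 1 + 1 = (N + 1) + (M + 1) := by omega
  refine ⟨N + M + 1, (Fin.append f g) ∘ Fin.cast hc, ?_, ?_⟩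
  · rw [hf, hg]
    refine Eq.trans ?_ (Equiv.prod_comp (finCongr hc) (Fin.append f g)).symm
    conv_rhs => rw [Fin.prod_univ_add]
    simp only [Fin.append_left, Fin.append_right]
  · refine Eq.trans ?_ (Equiv.sum_comp (finCongr hc) (fun j => φ (Fin.append f g j) ^ t)).symm
    conv_rhs => rw [Fin.sum_univ_add]
    simp only [Fin.append_left, Fin.append_right]

end aux2

section aux3
variable {G : Type*} [CommGroup G] {φ : G → ℝ} {t : ℝ}

lemma mv_one (ht : 0 < t) (hφ : IsHeight φ) : metricVersion φ t 1 = 0 := by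
  have h0 : (0:ℝ) ∈ mvSet φ t 1 := by
    refine ⟨0, fun _ => 1, by simp, ?_⟩
    rw [Fin.sum_univ_one, hφ.2.1, Real.zero_rpow ht.ne', Real.zero_rpow (by positivity)]
  exact le_antisymm (csInf_le (mvSet_bddBelow hφ 1) h0) (mv_nonneg ht hφ 1)

lemma mvSet_inv (hφ : IsHeight φ) (α : G) : mvSet φ t α⁻¹ = mvSet φ t α := by
  have key : ∀ β : G, mvSet φ t β ⊆ mvSet φ t β⁻¹ := by
    rintro β x ⟨N, f, hf, rfl⟩
    refine ⟨N, fun i => (f i)⁻¹, by rw [hf, Finset.prod_inv_distrib], ?_⟩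
    simp only [hφ.2.2]
  exact le_antisymm (by simpa using key α⁻¹) (key α)

lemma mv_inv (α : G) (hφ : IsHeight φ) : metricVersion φ t α⁻¹ = metricVersion φ t α := by
  unfold metricVersion
  rw [show {x : ℝ | ∃ (N : ℕ) (f : Fin (N + 1) → G),
    α⁻¹ = ∏ i, f i ∧ x = (∑ i, φ (f i) ^ t) ^ (1 / t)} = mvSet φ t α⁻¹ from rfl,
    mvSet_inv hφ α]
  rfl

lemma mv_isHeight (ht : 0 < t) (hφ : IsHeight φ) : IsHeight (metricVersion φ t) :=
  ⟨mv_nonneg ht hφ, mv_one ht hφ, fun α => mv_inv α hφ⟩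

lemma mv_triangle (ht : 0 < t) (hφ : IsHeight φ) (α β : G) :
    metricVersion φ t (α * β) ≤
      (metricVersion φ t α ^ t + metricVersion φ t β ^ t) ^ (1 / t) := by
  set A := metricVersion φ t α
  set B := metricVersion φ t β
  set C := metricVersion φ t (α * β)
  have hC : 0 ≤ C := mv_nonneg ht hφ _
  -- step 1 : C ^ t ≤ sInf pSet α + sInf pSet β
  have key : C ^ t ≤ sInf (pSet φ t α) + sInf (pSet φ t β) := by
    rw [← sub_le_iff_le_add']
    refine le_csInf (pSet_nonempty β) fun b hb => ?_
    rw [sub_le_iff_le_add']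
    rw [show sInf (pSet φ t α) + b = b + sInf (pSet φ t α) from add_comm _ _,
      ← sub_le_iff_le_add']
    refine le_csInf (pSet_nonempty α) fun a ha => ?_
    rw [sub_le_iff_le_add']
    have hmem : a + b ∈ pSet φ t (α * β) := add_mem_pSet ha hb
    have hab : 0 ≤ a + b := pSet_nonneg hφ hmem
    have h1 : C ≤ (a + b) ^ (1 / t) :=
      csInf_le (mvSet_bddBelow hφ _) (mem_mvSet_iff.2 ⟨a + b, hmem, rfl⟩)
    have h2 := Real.rpow_le_rpow hC h1 ht.le
    rwa [← Real.rpow_mul hab, one_div, inv_mul_cancel₀ ht.ne', Real.rpow_one,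
      add_comm a b] at h2
  have h3 : C ^ t ≤ A ^ t + B ^ t :=
    key.trans (add_le_add (sInf_pSet_le_mv_rpow ht hφ α) (sInf_pSet_le_mv_rpow ht hφ β))
  calc C = (C ^ t) ^ (1 / t) := by
        rw [← Real.rpow_mul hC, mul_one_div, div_self ht.ne', Real.rpow_one]
    _ ≤ (A ^ t + B ^ t) ^ (1 / t) :=
        Real.rpow_le_rpow (by positivity) h3 (by positivity)

lemma mv_isTMetric (ht : 0 < t) (hφ : IsHeight φ) :
    IsTMetricHeight (metricVersion φ t) t :=
  ⟨mv_isHeight ht hφ, mv_triangle ht hφ⟩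

lemma tmetric_imp_eq (ht : 0 < t) (hm : IsTMetricHeight φ t) : φ = metricVersion φ t := by
  have hφ := hm.1
  funext α
  refine le_antisymm (le_csInf (mvSet_nonempty ht hφ α) ?_) (mv_le_self ht hφ α)
  rintro x ⟨N, f, rfl, rfl⟩
  induction N with
  | zero =>
    rw [Fin.prod_univ_one, Fin.sum_univ_one, ← Real.rpow_mul (hφ.1 _), mul_one_div,
      div_self ht.ne', Real.rpow_one]
  | succ N ih =>
    rw [Fin.prod_univ_castSucc, Fin.sum_univ_castSucc]
    have h1 := hm.2 (∏ i : Fin (N + 1), f i.castSucc) (f (Fin.last (N + 1)))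
    refine h1.trans (Real.rpow_le_rpow
      (add_nonneg (Real.rpow_nonneg (hφ.1 _) _) (Real.rpow_nonneg (hφ.1 _) _))
      (add_le_add_left ?_ _) (by positivity))
    have h2 := ih (fun i => f i.castSucc)
    have hs : (0:ℝ) ≤ ∑ i : Fin (N + 1), φ (f i.castSucc) ^ t :=
      Finset.sum_nonneg fun i _ => Real.rpow_nonneg (hφ.1 _) _
    have h3 := Real.rpow_le_rpow (hφ.1 _) h2 ht.le
    rwa [← Real.rpow_mul hs, one_div, inv_mul_cancel₀ ht.ne', Real.rpow_one] at h3

end aux3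


/-- If `φ` is a height on `G` and `t ∈ (0,∞)`, then `φ = φ_t` if and only if `φ` is a
`t`-metric height on `G`.  In particular, `(φ_t)_t = φ_t`. -/
theorem metricVersion_eq_iff_tMetric {G : Type*} [CommGroup G] (φ : G → ℝ)
    (hφ : IsHeight φ) (t : ℝ) (ht : 0 < t) :
    (φ = metricVersion φ t ↔ IsTMetricHeight φ t) ∧
      metricVersion (metricVersion φ t) t = metricVersion φ t := by
  constructor
  · constructor
    · intro heq
      refine ⟨hφ, fun α β => ?_⟩
      rw [heq]
      exact mv_triangle ht hφ α β
    · exact fun hm => tmetric_imp_eq ht hm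
  · exact (tmetric_imp_eq ht (mv_isTMetric ht hφ)).symm
end

section
/- Let G be a multiplicatively written abelian group and let φ : G → [0,∞) be a height on G. Define φ_∞(α) = inf{max_{1≤n≤N} φ(α_n) : N ∈ ℕ, α_n ∈ G, α = ∏_{n=1}^N α_n}. Then φ_∞ is an ∞-metric height on G (that is, φ_∞(αβ) ≤ max{φ_∞(α), φ_∞(β)} for all α, β ∈ G) and φ_∞(α) ≤ φ(α) for all α ∈ G. -/
open scoped BigOperators

section
variable {G : Type*} [CommGroup G] (φ : G → ℝ)

/-- The defining set of `inftyMetricVersion`. -/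
def heightSet (α : G) : Set ℝ :=
  {x : ℝ | ∃ (N : ℕ) (f : Fin (N + 1) → G),
    α = ∏ i, f i ∧ x = Finset.univ.sup' Finset.univ_nonempty (fun i => φ (f i))}

lemma heightSet_self (α : G) : φ α ∈ heightSet φ α :=
  ⟨0, fun _ => α, by simp, by simp⟩

lemma heightSet_nonempty (α : G) : (heightSet φ α).Nonempty := ⟨_, heightSet_self φ α⟩

lemma heightSet_bddBelow (h0 : ∀ α : G, 0 ≤ φ α) (α : G) : BddBelow (heightSet φ α) := by
  refine ⟨0, ?_⟩
  rintro x ⟨N, f, hf, rfl⟩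
  exact le_trans (h0 (f 0)) (Finset.le_sup' (fun i => φ (f i)) (Finset.mem_univ 0))

lemma inftyMetricVersion_eq (α : G) : inftyMetricVersion φ α = sInf (heightSet φ α) := rfl

end

/-- If `φ` is a height on `G`, then `φ_∞` is an `∞`-metric height on `G`
(that is, `φ_∞(αβ) ≤ max{φ_∞(α), φ_∞(β)}` for all `α, β ∈ G`) and `φ_∞(α) ≤ φ(α)`
for all `α ∈ G`. -/
theorem inftyMetricVersion_isInftyMetricHeight_le {G : Type*} [CommGroup G] (φ : G → ℝ)
    (hφ : IsHeight φ) :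
    IsInftyMetricHeight (inftyMetricVersion φ) ∧ ∀ α : G, inftyMetricVersion φ α ≤ φ α := by
  obtain ⟨h0, h1, hinv⟩ := hφ
  have hbdd := heightSet_bddBelow φ h0
  have hle : ∀ α : G, inftyMetricVersion φ α ≤ φ α := fun α =>
    csInf_le (hbdd α) (heightSet_self φ α)
  have hnonneg : ∀ α : G, 0 ≤ inftyMetricVersion φ α := by
    intro α
    apply Real.sInf_nonneg
    rintro x ⟨N, f, hf, rfl⟩
    exact le_trans (h0 (f 0)) (Finset.le_sup' (fun i => φ (f i)) (Finset.mem_univ 0))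
  have hsub : ∀ α : G, heightSet φ α⁻¹ ⊆ heightSet φ α := by
    rintro α x ⟨N, f, hf, rfl⟩
    refine ⟨N, fun i => (f i)⁻¹, ?_, by simp [hinv]⟩
    rw [← inv_inv α, hf]
    simp
  have hinv' : ∀ α : G, inftyMetricVersion φ α⁻¹ = inftyMetricVersion φ α := by
    intro α
    have h2 : heightSet φ α ⊆ heightSet φ α⁻¹ := by
      have := hsub α⁻¹
      rwa [inv_inv] at this
    rw [inftyMetricVersion_eq, inftyMetricVersion_eq,
      Set.Subset.antisymm (hsub α) h2]
  have htri : ∀ α β : G, inftyMetricVersion φ (α * β) ≤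
      max (inftyMetricVersion φ α) (inftyMetricVersion φ β) := by
    intro α β
    refine le_of_forall_pos_le_add ?_
    intro ε hε
    obtain ⟨x, ⟨N, f, hf, rfl⟩, hx⟩ :=
      Real.lt_sInf_add_pos (heightSet_nonempty φ α) hε
    obtain ⟨y, ⟨M, g, hg, rfl⟩, hy⟩ :=
      Real.lt_sInf_add_pos (heightSet_nonempty φ β) hε
    have e : (N + M + 1) + 1 = (N + 1) + (M + 1) := by omega
    set h : Fin ((N + M + 1) + 1) → G := fun i => Fin.append f g (Fin.cast e i) with hh
    have hprod : α * β = ∏ i, h i := by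
      have h2 : ∏ i, h i = ∏ j, Fin.append f g j :=
        Fintype.prod_equiv (finCongr e) _ _ (fun i => rfl)
      have h3 := Fin.prod_univ_add (a := N + 1) (b := M + 1) (Fin.append f g)
      simp only [Fin.append_left, Fin.append_right] at h3
      rw [hf, hg, h2, h3]
    have hmem : Finset.univ.sup' Finset.univ_nonempty (fun i => φ (h i)) ∈
        heightSet φ (α * β) := ⟨N + M + 1, h, hprod, rfl⟩
    have hz : Finset.univ.sup' Finset.univ_nonempty (fun i => φ (h i)) ≤
        max (Finset.univ.sup' Finset.univ_nonempty (fun i => φ (f i)))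
            (Finset.univ.sup' Finset.univ_nonempty (fun i => φ (g i))) := by
      apply Finset.sup'_le
      intro i _
      rw [hh]
      refine Fin.addCases (motive := fun j => φ (Fin.append f g j) ≤ _) ?_ ?_ (Fin.cast e i)
      · intro k
        rw [Fin.append_left]
        exact le_trans (Finset.le_sup' (fun i => φ (f i)) (Finset.mem_univ k)) (le_max_left _ _)
      · intro k
        rw [Fin.append_right]
        exact le_trans (Finset.le_sup' (fun i => φ (g i)) (Finset.mem_univ k)) (le_max_right _ _)
    calc inftyMetricVersion φ (α * β) ≤ _ := csInf_le (hbdd _) hmem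
      _ ≤ _ := hz
      _ ≤ max (inftyMetricVersion φ α + ε) (inftyMetricVersion φ β + ε) :=
        max_le_max hx.le hy.le
      _ = max (inftyMetricVersion φ α) (inftyMetricVersion φ β) + ε := by
        rw [max_add_add_right]
  refine ⟨⟨⟨hnonneg, ?_, hinv'⟩, htri⟩, hle⟩
  exact le_antisymm (by simpa [h1] using hle 1) (hnonneg 1)
end

section
/- Let G be a multiplicatively written abelian group, let φ : G → [0,∞) be a height on G, fix α ∈ G, and let t ∈ (0,∞). Then the following conditions are equivalent: (i) there exist N ∈ ℕ and α_1, …, α_N ∈ G with α = ∏_{n=1}^N α_n and φ_t(α) = (∑_{n=1}^N φ(α_n)^t)^(1/t) (the infimum in the definition of φ_t(α) is attained); (ii) there exists a finite set R ⊆ G containing the identity that replaces G at t; (iii) there exists a set S ⊆ G containing the identity, with φ(S) finite, that replaces G at t. -/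
open scoped BigOperators

/-- A set `S ⊆ G` containing the identity *replaces* `G` at `t` (for `φ` and `α`) if
`φ_t(α)` equals the infimum of `(∑ₙ φ(αₙ)^t)^(1/t)` over factorizations of `α` with all
factors in `S`; we express this by saying that `φ_t(α)` is the greatest lower bound of
the set of values arising from such factorizations. -/
def Replaces {G : Type*} [CommGroup G] (φ : G → ℝ) (t : ℝ) (α : G) (S : Set G) : Prop :=
  IsGLB {x : ℝ | ∃ (N : ℕ) (f : Fin (N + 1) → G),
      (∀ i, f i ∈ S) ∧ α = ∏ i, f i ∧ x = (∑ i, φ (f i) ^ t) ^ (1 / t)}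
    (metricVersion φ t α)

/-- The infimum in the definition of `φ_t(α)` is attained: some finite factorization
of `α` achieves the value `φ_t(α)`. -/
def InfAttained {G : Type*} [CommGroup G] (φ : G → ℝ) (t : ℝ) (α : G) : Prop :=
  ∃ (N : ℕ) (f : Fin (N + 1) → G),
    α = ∏ i, f i ∧ metricVersion φ t α = (∑ i, φ (f i) ^ t) ^ (1 / t)

/-- The `L_t` norm `‖x‖_t = (∑ₙ |xₙ|^t)^(1/t)` of a finitely supported real sequence,
realized as a `Finsupp`. -/
noncomputable def ltNorm (x : ℕ →₀ ℝ) (t : ℝ) : ℝ :=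
  (∑ n ∈ x.support, |x n| ^ t) ^ (1 / t)

/-- A subset `K ⊆ (0,∞)` is *uniform* (for `φ` and `α`) if there is a single finitely
supported real sequence `x` with `φ_t(α) = ‖x‖_t` for all `t ∈ K`. -/
def IsUniform {G : Type*} [CommGroup G] (φ : G → ℝ) (α : G) (K : Set ℝ) : Prop :=
  ∃ x : ℕ →₀ ℝ, ∀ t ∈ K, metricVersion φ t α = ltNorm x t

/-- A point `t` of an interval `I` is *standard* relative to `I` (for `φ` and `α`) if
there is a uniform open interval `J ⊆ I` containing `t`; otherwise `t` is *exceptional*. -/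
def IsStandardPt {G : Type*} [CommGroup G] (φ : G → ℝ) (α : G) (I : Set ℝ) (t : ℝ) : Prop :=
  ∃ J : Set ℝ, J ⊆ I ∧ IsOpen J ∧ J.OrdConnected ∧ t ∈ J ∧ IsUniform φ α J

/-- `s` is an *intersection point* of a set `𝒳` of finitely supported real sequences if
there are `x, y ∈ 𝒳` with `‖x‖_s = ‖y‖_s` whose norm functions `t ↦ ‖x‖_t`, `t ↦ ‖y‖_t`
are not identical on `(0,∞)`. -/
def IsIntersectionPt (𝒳 : Set (ℕ →₀ ℝ)) (s : ℝ) : Prop :=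
  ∃ x ∈ 𝒳, ∃ y ∈ 𝒳, ltNorm x s = ltNorm y s ∧ ∃ t : ℝ, 0 < t ∧ ltNorm x t ≠ ltNorm y t


lemma multiset_sum_finite (C : ℝ) : ∀ (F : Finset ℝ), (∀ w ∈ F, 0 ≤ w) →
    {x : ℝ | (∃ m : Multiset ℝ, (∀ y ∈ m, y ∈ F) ∧ x = m.sum) ∧ x ≤ C}.Finite := by
  intro F
  induction F using Finset.induction with
  | empty =>
    intro _
    apply Set.Finite.subset (Set.finite_singleton 0)
    rintro x ⟨⟨m, hm, rfl⟩, -⟩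
    have : m = 0 := Multiset.eq_zero_of_forall_notMem fun y hy => by simpa using hm y hy
    simp [this]
  | @insert a F _ ih =>
    intro hF
    have hF' : ∀ w ∈ F, 0 ≤ w := fun w hw => hF w (Finset.mem_insert_of_mem hw)
    have ha0 : 0 ≤ a := hF a (Finset.mem_insert_self a F)
    set K : ℕ := ⌈C / a⌉₊ with hK
    apply Set.Finite.subset
      (Set.Finite.biUnion (Set.finite_Iic K)
        (fun n _ => Set.Finite.image (fun y => (n : ℝ) * a + y) (ih hF')))
    rintro x ⟨⟨m, hm, rfl⟩, hxC⟩
    set m' : Multiset ℝ := m.filter (fun y => ¬ y = a) with hm'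
    have hsplit : m.sum = (m.count a : ℝ) * a + m'.sum := by
      conv_lhs => rw [← Multiset.filter_add_not (fun y => y = a) m]
      rw [Multiset.sum_add, Multiset.filter_eq', Multiset.sum_replicate, nsmul_eq_mul]
    have hm'mem : ∀ y ∈ m', y ∈ F := by
      intro y hy
      rw [hm', Multiset.mem_filter] at hy
      rcases Finset.mem_insert.mp (hm y hy.1) with h | h
      · exact absurd h hy.2
      · exact h
    have hm'nonneg : 0 ≤ m'.sum :=
      Multiset.sum_nonneg (fun y hy => hF' y (hm'mem y hy))
    set n : ℕ := if a = 0 then 0 else m.count a with hn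
    have hxn : m.sum = (n : ℝ) * a + m'.sum := by
      rw [hsplit, hn]
      split
      · simp_all
      · rfl
    have hnK : n ≤ K := by
      rcases eq_or_lt_of_le ha0 with h | h
      · simp [hn, ← h]
      · have h1 : (n : ℝ) * a ≤ C := by
          calc (n : ℝ) * a ≤ (n : ℝ) * a + m'.sum := le_add_of_nonneg_right hm'nonneg
          _ = m.sum := hxn.symm
          _ ≤ C := hxC
        have : (n : ℝ) ≤ C / a := (le_div_iff₀ h).mpr h1
        exact_mod_cast this.trans (Nat.le_ceil _)
    refine Set.mem_biUnion (Set.mem_Iic.mpr hnK) ⟨m'.sum, ⟨⟨m', hm'mem, rfl⟩, ?_⟩, hxn.symm⟩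
    calc m'.sum ≤ (n : ℝ) * a + m'.sum :=
        le_add_of_nonneg_left (mul_nonneg (Nat.cast_nonneg n) ha0)
    _ = m.sum := hxn.symm
    _ ≤ C := hxC


lemma mem_of_isGLB_of_finite {B : Set ℝ} {m : ℝ} (h : IsGLB B m)
    (hfin : (B ∩ Set.Iic (m + 1)).Finite) : m ∈ B := by
  obtain ⟨b, hbB, -, hb⟩ := h.exists_between (lt_add_one m)
  have hne : (B ∩ Set.Iic (m + 1)).Nonempty := ⟨b, hbB, le_of_lt hb⟩
  obtain ⟨b0, hb0, hmin⟩ := Set.exists_min_image _ id hfin hne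
  have hlb : b0 ∈ lowerBounds B := by
    intro x hx
    by_cases hxm : x ≤ m + 1
    · exact hmin x ⟨hx, hxm⟩
    · exact le_trans hb0.2 (le_of_not_ge hxm)
  have h1 : b0 ≤ m := h.2 hlb
  have h2 : m ≤ b0 := h.1 hb0.1
  have : m = b0 := le_antisymm h2 h1
  rw [this]; exact hb0.1


lemma value_set_finite_below {G : Type*} [CommGroup G] (φ : G → ℝ) (hφ0 : ∀ α : G, 0 ≤ φ α)
    (α : G) (t : ℝ) (ht : 0 < t) (S : Set G) (hS : (φ '' S).Finite) (M : ℝ) (hM : 0 ≤ M) :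
    ({x : ℝ | ∃ (N : ℕ) (f : Fin (N + 1) → G),
      (∀ i, f i ∈ S) ∧ α = ∏ i, f i ∧ x = (∑ i, φ (f i) ^ t) ^ (1 / t)} ∩ Set.Iic M).Finite := by
  have hSt : ((fun v : ℝ => v ^ t) '' (φ '' S)).Finite := hS.image _
  set F : Finset ℝ := hSt.toFinset with hF
  have hFnn : ∀ w ∈ F, 0 ≤ w := by
    intro w hw
    rw [hF, Set.Finite.mem_toFinset] at hw
    obtain ⟨v, ⟨g, -, rfl⟩, rfl⟩ := hw
    exact Real.rpow_nonneg (hφ0 g) t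
  apply Set.Finite.subset (Set.Finite.image (fun s : ℝ => s ^ (1 / t))
    (multiset_sum_finite (M ^ t) F hFnn))
  rintro x ⟨⟨N, f, hfS, -, rfl⟩, hxM⟩
  set s : ℝ := ∑ i, φ (f i) ^ t with hs
  have hsnn : 0 ≤ s := Finset.sum_nonneg fun i _ => Real.rpow_nonneg (hφ0 _) t
  refine ⟨s, ⟨⟨(Finset.univ.val).map (fun i => φ (f i) ^ t), ?_, rfl⟩, ?_⟩, rfl⟩
  · intro y hy
    obtain ⟨i, -, rfl⟩ := Multiset.mem_map.mp hy
    rw [hF, Set.Finite.mem_toFinset]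
    exact ⟨φ (f i), ⟨f i, hfS i, rfl⟩, rfl⟩
  · have h1 : (s ^ (1 / t)) ^ t ≤ M ^ t :=
      Real.rpow_le_rpow (Real.rpow_nonneg hsnn _) hxM (le_of_lt ht)
    rwa [one_div, Real.rpow_inv_rpow hsnn (ne_of_gt ht)] at h1


/-- For a height `φ` on `G`, `α ∈ G`, and `t ∈ (0,∞)`, the following are equivalent:
(i) the infimum in the definition of `φ_t(α)` is attained;
(ii) there is a finite set `R ⊆ G` containing the identity that replaces `G` at `t`;
(iii) there is a set `S ⊆ G` containing the identity, with `φ(S)` finite, that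
replaces `G` at `t`. -/
theorem infAttained_tfae {G : Type*} [CommGroup G] (φ : G → ℝ) (hφ : IsHeight φ)
    (α : G) (t : ℝ) (ht : 0 < t) :
    List.TFAE [InfAttained φ t α,
      ∃ R : Set G, R.Finite ∧ (1 : G) ∈ R ∧ Replaces φ t α R,
      ∃ S : Set G, (1 : G) ∈ S ∧ (φ '' S).Finite ∧ Replaces φ t α S] := by
  have hφ0 := hφ.1
  -- the full value set
  set B : Set ℝ := {x : ℝ | ∃ (N : ℕ) (f : Fin (N + 1) → G),
    α = ∏ i, f i ∧ x = (∑ i, φ (f i) ^ t) ^ (1 / t)} with hB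
  have hBne : B.Nonempty := by
    refine ⟨(∑ i : Fin 1, φ ((fun _ => α) i) ^ t) ^ (1 / t), 0, fun _ => α, by simp, rfl⟩
  have hBbdd : BddBelow B := by
    refine ⟨0, ?_⟩
    rintro x ⟨N, f, -, rfl⟩
    exact Real.rpow_nonneg (Finset.sum_nonneg fun i _ => Real.rpow_nonneg (hφ0 _) t) _
  have hmlb : metricVersion φ t α ∈ lowerBounds B := fun x hx => csInf_le hBbdd hx
  have hm0 : 0 ≤ metricVersion φ t α := le_csInf hBne fun x hx => by
    obtain ⟨N, f, -, rfl⟩ := hx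
    exact Real.rpow_nonneg (Finset.sum_nonneg fun i _ => Real.rpow_nonneg (hφ0 _) t) _
  tfae_have 1 → 2
  · rintro ⟨N, f, hprod, hval⟩
    refine ⟨{1} ∪ Set.range f, (Set.finite_singleton 1).union (Set.finite_range f),
      Or.inl rfl, ?_, ?_⟩
    · rintro x ⟨N', f', -, hprod', rfl⟩
      exact hmlb ⟨N', f', hprod', rfl⟩
    · intro b hb
      rw [hval]
      exact hb ⟨N, f, fun i => Or.inr ⟨i, rfl⟩, hprod, rfl⟩
  tfae_have 2 → 3
  · rintro ⟨R, hRfin, hR1, hrep⟩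
    exact ⟨R, hR1, hRfin.image φ, hrep⟩
  tfae_have 3 → 1
  · rintro ⟨S, hS1, hSfin, hrep⟩
    have hfin := value_set_finite_below φ hφ0 α t ht S hSfin
      (metricVersion φ t α + 1) (by linarith)
    have hmem := mem_of_isGLB_of_finite hrep hfin
    obtain ⟨N, f, -, hprod, hval⟩ := hmem
    exact ⟨N, f, hprod, hval⟩
  tfae_finish
end

section
/- Let G be a multiplicatively written abelian group, let φ : G → [0,∞) be a height on G, fix α ∈ G, and let J ⊆ (0,∞) be a bounded set. Suppose there exists a set S ⊆ G containing the identity, with φ(S) finite, such that S replaces G at every t ∈ J. Then there exists a finite set D of factorizations of α with all factors in S (i.e., a finite set of finite tuples (α_1, …, α_N) with each α_n ∈ S and α = ∏_{n=1}^N α_n) such that φ_t(α) = min{(∑_{n=1}^N φ(α_n)^t)^(1/t) : (α_1,…,α_N) ∈ D} for all t ∈ J. In particular, there exists a finite set 𝒳 of finitely supported real sequences such that φ_t(α) = min{‖x‖_t : x ∈ 𝒳} for all t ∈ J. -/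
open scoped BigOperators

section Aux
set_option linter.unusedSectionVars false
variable {G : Type*} [CommGroup G] (φ : G → ℝ)

noncomputable def auxProfile (d : (N : ℕ) × (Fin (N + 1) → G)) : Multiset ℝ :=
  Multiset.filter (fun x => x ≠ 0) (Multiset.map φ ↑(List.ofFn d.2))

lemma auxProfile_card_le (d : (N : ℕ) × (Fin (N + 1) → G)) :
    (auxProfile φ d).card ≤ d.1 + 1 := by
  calc (auxProfile φ d).card ≤ (Multiset.map φ ↑(List.ofFn d.2)).card :=
        Multiset.card_le_card (Multiset.filter_le _ _)
    _ = d.1 + 1 := by simp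

lemma mem_auxProfile {d : (N : ℕ) × (Fin (N + 1) → G)} {x : ℝ} (hx : x ∈ auxProfile φ d) :
    x ≠ 0 ∧ ∃ i, φ (d.2 i) = x := by
  rw [auxProfile, Multiset.mem_filter] at hx
  obtain ⟨hx1, hx2⟩ := hx
  refine ⟨hx2, ?_⟩
  obtain ⟨g, hg, rfl⟩ := Multiset.mem_map.mp hx1
  rw [Multiset.mem_coe, List.mem_ofFn] at hg
  obtain ⟨i, rfl⟩ := hg
  exact ⟨i, rfl⟩

lemma sum_rpow_eq {t : ℝ} (ht : t ≠ 0) (d : (N : ℕ) × (Fin (N + 1) → G)) :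
    ∑ i, φ (d.2 i) ^ t = ((auxProfile φ d).map (fun x => x ^ t)).sum := by
  have h0 : ∑ i, φ (d.2 i) ^ t
      = ((Multiset.map φ ↑(List.ofFn d.2)).map (fun x => x ^ t)).sum := by
    rw [Multiset.map_map, Multiset.map_coe, Multiset.sum_coe, List.map_ofFn, List.sum_ofFn]
    rfl
  rw [h0]
  have h2 := Multiset.filter_add_not (fun x => x ≠ 0) (Multiset.map φ ↑(List.ofFn d.2))
  conv_lhs => rw [← h2]
  rw [Multiset.map_add, Multiset.sum_add, auxProfile]
  have h3 : (Multiset.map (fun x => x ^ t)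
      (Multiset.filter (fun x => ¬x ≠ 0) (Multiset.map φ ↑(List.ofFn d.2)))).sum = 0 := by
    apply Multiset.sum_eq_zero
    intro y hy
    obtain ⟨z, hz, rfl⟩ := Multiset.mem_map.mp hy
    have hz0 : z = 0 := not_not.mp (Multiset.mem_filter.mp hz).2
    rw [hz0, Real.zero_rpow ht]
  rw [h3, add_zero]

noncomputable def toSeq (d : (N : ℕ) × (Fin (N + 1) → G)) : ℕ →₀ ℝ :=
  Finsupp.onFinset (Finset.range (d.1 + 1))
    (fun n => if h : n < d.1 + 1 then φ (d.2 ⟨n, h⟩) else 0)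
    (fun n hn => by
      rw [Finset.mem_range]
      by_contra h
      exact hn (dif_neg h))

lemma ltNorm_toSeq (hpos : ∀ g, 0 ≤ φ g) {t : ℝ} (ht : t ≠ 0)
    (d : (N : ℕ) × (Fin (N + 1) → G)) :
    ltNorm (toSeq φ d) t = (∑ i, φ (d.2 i) ^ t) ^ (1 / t) := by
  rw [ltNorm]
  congr 1
  rw [toSeq]
  rw [Finset.sum_subset (Finsupp.support_onFinset_subset)
    (by
      intro n _ hn
      rw [Finsupp.notMem_support_iff] at hn
      rw [hn, abs_zero, Real.zero_rpow ht])]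
  simp only [Finsupp.onFinset_apply]
  rw [← Fin.sum_univ_eq_sum_range
    (fun n => |if h : n < d.1 + 1 then φ (d.2 ⟨n, h⟩) else 0| ^ t) (d.1 + 1)]
  apply Finset.sum_congr rfl
  intro i _
  rw [dif_pos i.isLt, Fin.eta, abs_of_nonneg (hpos _)]

end Aux

/-- Suppose `J ⊆ (0,∞)` is bounded and there is a set `S ⊆ G` containing the identity,
with `φ(S)` finite, replacing `G` at every `t ∈ J`.  Then there is a finite set `D` of
factorizations of `α` with all factors in `S` such that
`φ_t(α) = min{(∑ₙ φ(αₙ)^t)^(1/t) : (α₁,…,α_N) ∈ D}` for all `t ∈ J`; in particular there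
is a finite set `𝒳` of finitely supported real sequences with
`φ_t(α) = min{‖x‖_t : x ∈ 𝒳}` for all `t ∈ J`. -/
theorem finite_min_of_replaces_bounded {G : Type*} [CommGroup G] (φ : G → ℝ)
    (hφ : IsHeight φ) (α : G) (J : Set ℝ) (hJ : J ⊆ Set.Ioi 0) (hJbd : BddAbove J)
    (S : Set G) (hS1 : (1 : G) ∈ S) (hSfin : (φ '' S).Finite)
    (hrep : ∀ t ∈ J, Replaces φ t α S) :
    (∃ D : Set ((N : ℕ) × (Fin (N + 1) → G)), D.Finite ∧
      (∀ d ∈ D, (∀ i, d.2 i ∈ S) ∧ α = ∏ i, d.2 i) ∧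
      ∀ t ∈ J, IsLeast {r : ℝ | ∃ d ∈ D, r = (∑ i, φ (d.2 i) ^ t) ^ (1 / t)}
        (metricVersion φ t α)) ∧
    ∃ 𝒳 : Set (ℕ →₀ ℝ), 𝒳.Finite ∧
      ∀ t ∈ J, IsLeast ((fun x => ltNorm x t) '' 𝒳) (metricVersion φ t α) := by
  classical
  obtain ⟨hpos, h1, hinv⟩ := hφ
  -- it suffices to prove the first conjunct
  suffices h : ∃ D : Set ((N : ℕ) × (Fin (N + 1) → G)), D.Finite ∧
      (∀ d ∈ D, (∀ i, d.2 i ∈ S) ∧ α = ∏ i, d.2 i) ∧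
      ∀ t ∈ J, IsLeast {r : ℝ | ∃ d ∈ D, r = (∑ i, φ (d.2 i) ^ t) ^ (1 / t)}
        (metricVersion φ t α) by
    obtain ⟨D, hDfin, hDmem, hDleast⟩ := h
    refine ⟨⟨D, hDfin, hDmem, hDleast⟩, toSeq φ '' D, hDfin.image _, ?_⟩
    intro t ht
    have ht0 : (0:ℝ) < t := hJ ht
    have hset : (fun x => ltNorm x t) '' (toSeq φ '' D)
        = {r : ℝ | ∃ d ∈ D, r = (∑ i, φ (d.2 i) ^ t) ^ (1 / t)} := by
      ext r
      constructor
      · rintro ⟨x, ⟨d, hd, rfl⟩, rfl⟩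
        exact ⟨d, hd, (ltNorm_toSeq φ hpos ht0.ne' d).symm ▸ rfl⟩
      · rintro ⟨d, hd, rfl⟩
        exact ⟨toSeq φ d, ⟨d, hd, rfl⟩, ltNorm_toSeq φ hpos ht0.ne' d⟩
    rw [hset]
    exact hDleast t ht
  rcases Set.eq_empty_or_nonempty J with rfl | ⟨t₁, ht₁⟩
  · exact ⟨∅, Set.finite_empty, fun d hd => absurd hd (Set.notMem_empty d),
      fun t ht => absurd ht (Set.notMem_empty t)⟩
  -- set of S-factorizations
  set Fac : Set ((N : ℕ) × (Fin (N + 1) → G)) := {d | (∀ i, d.2 i ∈ S) ∧ α = ∏ i, d.2 i}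
    with hFacdef
  have hmemX : ∀ {t : ℝ}, ∀ d ∈ Fac, (∑ i, φ (d.2 i) ^ t) ^ (1 / t) ∈
      {x : ℝ | ∃ (N : ℕ) (f : Fin (N + 1) → G),
        (∀ i, f i ∈ S) ∧ α = ∏ i, f i ∧ x = (∑ i, φ (f i) ^ t) ^ (1 / t)} :=
    fun {t} d hd => ⟨d.1, d.2, hd.1, hd.2, rfl⟩
  have hne : Fac.Nonempty := by
    by_contra hcon
    rw [Set.not_nonempty_iff_eq_empty] at hcon
    have hX : {x : ℝ | ∃ (N : ℕ) (f : Fin (N + 1) → G),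
        (∀ i, f i ∈ S) ∧ α = ∏ i, f i ∧ x = (∑ i, φ (f i) ^ t₁) ^ (1 / t₁)} = ∅ := by
      ext x
      simp only [Set.mem_setOf_eq, Set.mem_empty_iff_false, iff_false]
      rintro ⟨N, f, hfS, hprod, -⟩
      have hmem : (⟨N, f⟩ : (N : ℕ) × (Fin (N + 1) → G)) ∈ Fac := ⟨hfS, hprod⟩
      rw [hcon] at hmem
      exact hmem
    have hg := hrep t₁ ht₁
    rw [Replaces, hX] at hg
    have hcontr : metricVersion φ t₁ α + 1 ≤ metricVersion φ t₁ α :=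
      hg.2 (fun x hx => absurd hx (Set.notMem_empty x))
    linarith
  obtain ⟨f₀, hf₀⟩ := hne
  obtain ⟨T, hT⟩ := hJbd
  set W : Finset ℝ := hSfin.toFinset.filter (fun x => 0 < x) with hWdef
  set v : ℝ := if h : W.Nonempty then W.min' h else 1 with hvdef
  have hv0 : 0 < v := by
    rw [hvdef]; split_ifs with h
    · exact (Finset.mem_filter.mp (W.min'_mem h)).2
    · exact one_pos
  have hvle : ∀ x ∈ W, v ≤ x := by
    intro x hx
    rw [hvdef, dif_pos ⟨x, hx⟩]
    exact W.min'_le x hx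
  have hentry : ∀ d ∈ Fac, ∀ x ∈ auxProfile φ d, x ∈ W ∧ v ≤ x := by
    intro d hd x hx
    obtain ⟨hx0, i, hix⟩ := mem_auxProfile φ hx
    have hxW : x ∈ W := by
      rw [hWdef, Finset.mem_filter, Set.Finite.mem_toFinset]
      exact ⟨⟨d.2 i, hd.1 i, hix⟩, lt_of_le_of_ne (hix ▸ hpos (d.2 i)) (Ne.symm hx0)⟩
    exact ⟨hxW, hvle x hxW⟩
  set C : ℝ := ∑ i, max 1 ((φ (f₀.2 i) / v) ^ T) with hCdef
  set K : ℕ := ⌈C⌉₊ + f₀.1 + 1 with hKdef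
  have hCK : C ≤ K := by
    calc C ≤ (⌈C⌉₊ : ℝ) := Nat.le_ceil C
      _ ≤ K := by rw [hKdef]; push_cast; linarith
  set Q : Set (Multiset ℝ) := {q | (∃ d ∈ Fac, auxProfile φ d = q) ∧ Multiset.card q ≤ K}
    with hQdef
  have hQfin : Q.Finite := by
    apply Set.Finite.subset ((K • W.val).powerset.toFinset.finite_toSet)
    rintro q ⟨⟨d, hd, rfl⟩, hcard⟩
    rw [Finset.mem_coe, Multiset.mem_toFinset, Multiset.mem_powerset]
    rw [Multiset.le_iff_count]
    intro a
    by_cases ha : a ∈ auxProfile φ d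
    · calc Multiset.count a (auxProfile φ d) ≤ Multiset.card (auxProfile φ d) :=
            Multiset.count_le_card a _
        _ ≤ K := hcard
        _ = K * 1 := (mul_one K).symm
        _ ≤ K * Multiset.count a W.val := by
            apply Nat.mul_le_mul_left
            exact Multiset.one_le_count_iff_mem.mpr ((hentry d hd a ha).1)
        _ = Multiset.count a (K • W.val) := (Multiset.count_nsmul a K W.val).symm
    · rw [Multiset.count_eq_zero_of_notMem ha]; exact Nat.zero_le _
  set rep : Multiset ℝ → (N : ℕ) × (Fin (N + 1) → G) :=
    fun q => if h : ∃ d ∈ Fac, auxProfile φ d = q then h.choose else f₀ with hrepdef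
  have hrepFac : ∀ q, rep q ∈ Fac := by
    intro q
    rw [hrepdef]; dsimp only; split_ifs with h
    · exact h.choose_spec.1
    · exact hf₀
  have hrepProf : ∀ d ∈ Fac, auxProfile φ (rep (auxProfile φ d)) = auxProfile φ d := by
    intro d hd
    have h : ∃ d' ∈ Fac, auxProfile φ d' = auxProfile φ d := ⟨d, hd, rfl⟩
    rw [hrepdef]; dsimp only; rw [dif_pos h]
    exact h.choose_spec.2
  refine ⟨rep '' Q, hQfin.image rep, fun d hd => by
      obtain ⟨q, -, rfl⟩ := hd; exact hrepFac q, ?_⟩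
  intro t ht
  have ht0 : (0:ℝ) < t := hJ ht
  have htT : t ≤ T := hT ht
  have hglb := hrep t ht
  rw [Replaces] at hglb
  have hval : ∀ d d' : (N : ℕ) × (Fin (N + 1) → G), auxProfile φ d = auxProfile φ d' →
      (∑ i, φ (d.2 i) ^ t) ^ (1 / t) = (∑ i, φ (d'.2 i) ^ t) ^ (1 / t) := by
    intro d d' hdd
    rw [sum_rpow_eq φ ht0.ne' d, sum_rpow_eq φ ht0.ne' d', hdd]
  set F : Set ℝ := {r : ℝ | ∃ d ∈ rep '' Q, r = (∑ i, φ (d.2 i) ^ t) ^ (1 / t)} with hFdef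
  have hFfin : F.Finite := by
    have himg : F = (fun d => (∑ i, φ (d.2 i) ^ t) ^ (1 / t)) '' (rep '' Q) := by
      ext r; constructor
      · rintro ⟨d, hd, rfl⟩; exact ⟨d, hd, rfl⟩
      · rintro ⟨d, hd, rfl⟩; exact ⟨d, hd, rfl⟩
    rw [himg]; exact (hQfin.image rep).image _
  have hq₀ : auxProfile φ f₀ ∈ Q := by
    refine ⟨⟨f₀, hf₀, rfl⟩, ?_⟩
    calc Multiset.card (auxProfile φ f₀) ≤ f₀.1 + 1 := auxProfile_card_le φ f₀
      _ ≤ K := by rw [hKdef]; omega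
  have hFne : F.Nonempty := ⟨_, ⟨rep (auxProfile φ f₀), ⟨_, hq₀, rfl⟩, rfl⟩⟩
  have hlb : ∀ r ∈ F, metricVersion φ t α ≤ r := by
    rintro r ⟨d, hd, rfl⟩
    exact hglb.1 (hmemX d (by obtain ⟨q, -, rfl⟩ := hd; exact hrepFac q))
  obtain ⟨r, hrF, hrmin⟩ := Set.exists_min_image F id hFfin hFne
  have hrlow : r ∈ lowerBounds {x : ℝ | ∃ (N : ℕ) (f : Fin (N + 1) → G),
      (∀ i, f i ∈ S) ∧ α = ∏ i, f i ∧ x = (∑ i, φ (f i) ^ t) ^ (1 / t)} := by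
    rintro x ⟨N, f, hfS, hprod, rfl⟩
    have hd : (⟨N, f⟩ : (N : ℕ) × (Fin (N + 1) → G)) ∈ Fac := ⟨hfS, hprod⟩
    set d : (N : ℕ) × (Fin (N + 1) → G) := ⟨N, f⟩ with hddef
    show r ≤ (∑ i, φ (d.2 i) ^ t) ^ (1 / t)
    by_cases hc : Multiset.card (auxProfile φ d) ≤ K
    · have hdQ : auxProfile φ d ∈ Q := ⟨⟨d, hd, rfl⟩, hc⟩
      have hmemF : (∑ i, φ ((rep (auxProfile φ d)).2 i) ^ t) ^ (1 / t) ∈ F :=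
        ⟨rep (auxProfile φ d), ⟨_, hdQ, rfl⟩, rfl⟩
      calc r ≤ (∑ i, φ ((rep (auxProfile φ d)).2 i) ^ t) ^ (1 / t) := hrmin _ hmemF
        _ = (∑ i, φ (d.2 i) ^ t) ^ (1 / t) := hval _ _ (hrepProf d hd)
    · push_neg at hc
      -- case b : too many factors, the value is at least that of f₀
      have hs₀C : ∑ i, φ (f₀.2 i) ^ t ≤ C * v ^ t := by
        rw [hCdef, Finset.sum_mul]
        apply Finset.sum_le_sum
        intro i _
        set a : ℝ := φ (f₀.2 i) with hadef
        have ha : 0 ≤ a := hpos _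
        have hsplit : a ^ t = (a / v) ^ t * v ^ t := by
          rw [← Real.mul_rpow (div_nonneg ha hv0.le) hv0.le, div_mul_cancel₀ a hv0.ne']
        rw [hsplit]
        apply mul_le_mul_of_nonneg_right _ (Real.rpow_nonneg hv0.le t)
        rcases le_or_gt 1 (a / v) with h | h
        · exact le_max_of_le_right (Real.rpow_le_rpow_of_exponent_le h htT)
        · exact le_max_of_le_left (Real.rpow_le_one (div_nonneg ha hv0.le) h.le ht0.le)
      have hCm : C * v ^ t ≤ (Multiset.card (auxProfile φ d) : ℝ) * v ^ t := by
        apply mul_le_mul_of_nonneg_right _ (Real.rpow_nonneg hv0.le t)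
        calc C ≤ (K : ℝ) := hCK
          _ ≤ (Multiset.card (auxProfile φ d) : ℝ) := Nat.cast_le.mpr hc.le
      have hms : (Multiset.card (auxProfile φ d) : ℝ) * v ^ t ≤ ∑ i, φ (d.2 i) ^ t := by
        rw [sum_rpow_eq φ ht0.ne' d]
        have hbound : ∀ y ∈ (auxProfile φ d).map (fun x => x ^ t), v ^ t ≤ y := by
          rintro y hy
          obtain ⟨x, hx, rfl⟩ := Multiset.mem_map.mp hy
          exact Real.rpow_le_rpow hv0.le ((hentry d hd x hx).2) ht0.le
        have hns := Multiset.card_nsmul_le_sum hbound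
        rwa [Multiset.card_map, nsmul_eq_mul] at hns
      have hf₀d : (∑ i, φ (f₀.2 i) ^ t) ^ (1 / t) ≤ (∑ i, φ (d.2 i) ^ t) ^ (1 / t) := by
        apply Real.rpow_le_rpow (Finset.sum_nonneg fun i _ => Real.rpow_nonneg (hpos _) t)
          (le_trans hs₀C (le_trans hCm hms)) (by positivity)
      have hmemF : (∑ i, φ ((rep (auxProfile φ f₀)).2 i) ^ t) ^ (1 / t) ∈ F :=
        ⟨rep (auxProfile φ f₀), ⟨_, hq₀, rfl⟩, rfl⟩
      calc r ≤ (∑ i, φ ((rep (auxProfile φ f₀)).2 i) ^ t) ^ (1 / t) := hrmin _ hmemF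
        _ = (∑ i, φ (f₀.2 i) ^ t) ^ (1 / t) := hval _ _ (hrepProf f₀ hf₀)
        _ ≤ (∑ i, φ (d.2 i) ^ t) ^ (1 / t) := hf₀d
  have hfin : metricVersion φ t α = r := le_antisymm (hlb r hrF) (hglb.2 hrlow)
  exact ⟨hfin ▸ hrF, hlb⟩
end

section
/- Let x and y be finitely supported sequences of real numbers, and suppose that ‖x‖_t = ‖y‖_t for all t in a subset of (0,∞) that has a limit point in ℝ. Then ‖x‖_t = ‖y‖_t for all t ∈ (0,∞). -/
open scoped BigOperators

lemma sumAnalytic (x : ℕ →₀ ℝ) :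
    AnalyticOnNhd ℝ (fun t : ℝ => ∑ n ∈ x.support, |x n| ^ t) Set.univ := by
  refine x.support.analyticOnNhd_fun_sum (fun n hn => ?_)
  have hpos : 0 < |x n| := abs_pos.mpr (Finsupp.mem_support_iff.mp hn)
  have h2 : (HPow.hPow |x n| : ℝ → ℝ) = fun t => Real.exp (Real.log |x n| * t) := by
    funext t; rw [Real.rpow_def_of_pos hpos]
  rw [h2]
  exact analyticOnNhd_rexp.comp
    ((analyticOnNhd_const.mul analyticOnNhd_id)) (Set.mapsTo_univ _ _)

/-- If `x` and `y` are finitely supported real sequences with `‖x‖_t = ‖y‖_t` for all `t` in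
a subset of `(0,∞)` having a limit point in `ℝ`, then `‖x‖_t = ‖y‖_t` for all `t ∈ (0,∞)`. -/
theorem ltNorm_eq_of_eq_on_accumulating {x y : ℕ →₀ ℝ} {K : Set ℝ}
    (hK : K ⊆ Set.Ioi 0) (hacc : ∃ c : ℝ, AccPt c (Filter.principal K))
    (heq : ∀ t ∈ K, ltNorm x t = ltNorm y t) :
    ∀ t ∈ Set.Ioi (0 : ℝ), ltNorm x t = ltNorm y t := by
  obtain ⟨c, hc⟩ := hacc
  set f := fun t : ℝ => ∑ n ∈ x.support, |x n| ^ t with hf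
  set g := fun t : ℝ => ∑ n ∈ y.support, |y n| ^ t with hg
  have hfnn : ∀ t, 0 ≤ f t := fun t =>
    Finset.sum_nonneg fun n _ => Real.rpow_nonneg (abs_nonneg _) _
  have hgnn : ∀ t, 0 ≤ g t := fun t =>
    Finset.sum_nonneg fun n _ => Real.rpow_nonneg (abs_nonneg _) _
  -- f = g on K
  have hfg : ∀ t ∈ K, f t = g t := by
    intro t ht
    have ht0 : (0:ℝ) < t := hK ht
    have h := heq t ht
    unfold ltNorm at h
    have := congrArg (fun r : ℝ => r ^ t) h
    simpa [← Real.rpow_natCast, ← Real.rpow_mul (x := ∑ n ∈ x.support, |x n| ^ t) (hfnn t),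
      ← Real.rpow_mul (x := ∑ n ∈ y.support, |y n| ^ t) (hgnn t),
      one_div, inv_mul_cancel₀ ht0.ne'] using this
  have hfreq : ∃ᶠ z in nhdsWithin c {c}ᶜ, f z = g z := by
    have := accPt_iff_frequently.mp hc
    rw [frequently_nhdsWithin_iff]
    exact this.mono fun z ⟨hne, hz⟩ => ⟨hfg z hz, hne⟩
  have hEq : Set.EqOn f g Set.univ :=
    (sumAnalytic x).eqOn_of_preconnected_of_frequently_eq (sumAnalytic y)
      isPreconnected_univ (Set.mem_univ c) hfreq
  intro t ht
  unfold ltNorm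
  rw [show (∑ n ∈ x.support, |x n| ^ t) = f t from rfl,
      show (∑ n ∈ y.support, |y n| ^ t) = g t from rfl, hEq (Set.mem_univ t)]
end

section
/- Let a_1, …, a_K be nonzero real numbers and b_1 > b_2 > ⋯ > b_K > 0 be real numbers with K ≥ 1, and define F(t) = ∑_{k=1}^K a_k b_k^t. Then F has only finitely many zeros in (0,∞). Consequently, if x and y are finitely supported real sequences such that the functions t ↦ ‖x‖_t and t ↦ ‖y‖_t on (0,∞) are not identical, then the set {t ∈ (0,∞) : ‖x‖_t = ‖y‖_t} is finite. -/
open scoped BigOperators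
open Filter Topology

lemma expsum_analytic (B : Finset ℝ) (hpos : ∀ β ∈ B, (0:ℝ) < β) (c : ℝ → ℝ) :
    AnalyticOnNhd ℝ (fun t : ℝ => ∑ β ∈ B, c β * β ^ t) Set.univ := by
  apply Finset.analyticOnNhd_fun_sum
  intro β hβ
  have : (fun t : ℝ => c β * β ^ t) = fun t => c β * Real.exp (Real.log β * t) := by
    funext t; rw [Real.rpow_def_of_pos (hpos β hβ)]
  rw [this]
  exact analyticOnNhd_const.mul ((analyticOnNhd_const.mul analyticOnNhd_id).rexp)

lemma expsum_finite_zeros (B : Finset ℝ) (hBne : B.Nonempty) (hpos : ∀ β ∈ B, (0:ℝ) < β)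
    (c : ℝ → ℝ) (hc : ∀ β ∈ B, c β ≠ 0) :
    {t ∈ Set.Ioi (0:ℝ) | ∑ β ∈ B, c β * β ^ t = 0}.Finite := by
  set f : ℝ → ℝ := fun t => ∑ β ∈ B, c β * β ^ t with hf
  set β₀ : ℝ := B.max' hBne with hβ₀
  have hβ₀mem : β₀ ∈ B := B.max'_mem hBne
  have hβ₀pos : 0 < β₀ := hpos _ hβ₀mem
  -- dominance at infinity
  have hg : Tendsto (fun t : ℝ => ∑ β ∈ B, c β * (β / β₀) ^ t) atTop (𝓝 (c β₀)) := by
    have := Finset.sum_ite_eq' B β₀ (fun β => c β)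
    rw [if_pos hβ₀mem] at this
    rw [← this]
    apply tendsto_finset_sum
    intro β hβ
    by_cases h : β = β₀
    · rw [if_pos h]
      have heq : (fun t : ℝ => c β * (β / β₀) ^ t) = fun _ => c β := by
        funext t; rw [h, div_self hβ₀pos.ne', Real.one_rpow, mul_one]
      rw [heq]; exact tendsto_const_nhds
    · simp only [if_neg h]
      have hlt : β < β₀ := lt_of_le_of_ne (B.le_max' β hβ) h
      have h0 : (0:ℝ) < β / β₀ := div_pos (hpos β hβ) hβ₀pos
      have h1 : β / β₀ < 1 := (div_lt_one hβ₀pos).2 hlt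
      have := tendsto_rpow_atTop_of_base_lt_one (β / β₀) (by linarith) h1
      simpa using (this.const_mul (c β))
  have hne : ∀ᶠ t : ℝ in atTop, (∑ β ∈ B, c β * (β / β₀) ^ t) ≠ 0 :=
    hg.eventually_ne (hc _ hβ₀mem)
  obtain ⟨T, hT⟩ := eventually_atTop.1 hne
  have hfT : ∀ t ≥ T, f t ≠ 0 := by
    intro t ht
    have hrw : f t = β₀ ^ t * ∑ β ∈ B, c β * (β / β₀) ^ t := by
      rw [Finset.mul_sum]
      apply Finset.sum_congr rfl
      intro β hβ
      rw [Real.div_rpow (hpos β hβ).le hβ₀pos.le]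
      field_simp [(Real.rpow_pos_of_pos hβ₀pos t).ne']
      try ring
    rw [hrw]
    exact mul_ne_zero (Real.rpow_pos_of_pos hβ₀pos t).ne' (hT t ht)
  by_contra hinf
  have hinf' : {t ∈ Set.Ioi (0:ℝ) | f t = 0}.Infinite := hinf
  have hsub : {t ∈ Set.Ioi (0:ℝ) | f t = 0} ⊆ Set.Icc 0 T := by
    rintro t ⟨ht, hft⟩
    exact ⟨le_of_lt ht, le_of_not_gt fun h => hfT t h.le hft⟩
  obtain ⟨x₀, hx₀K, hx₀⟩ := hinf'.exists_accPt_of_subset_isCompact isCompact_Icc hsub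
  have hfreq : ∃ᶠ z in 𝓝[≠] x₀, f z = 0 := by
    have := accPt_iff_frequently.1 hx₀
    rw [frequently_nhdsWithin_iff]
    exact this.mono (fun z hz => ⟨hz.2.2, hz.1⟩)
  have hzero : Set.EqOn f 0 Set.univ :=
    (expsum_analytic B hpos c).eqOn_zero_of_preconnected_of_frequently_eq_zero
      isPreconnected_univ (Set.mem_univ x₀) hfreq
  exact hfT T le_rfl (hzero (Set.mem_univ T))

/-- Let `a₁, …, a_K` be nonzero reals and `b₁ > b₂ > ⋯ > b_K > 0` with `K ≥ 1`, and set
`F(t) = ∑ₖ aₖ bₖ^t`.  Then `F` has only finitely many zeros in `(0,∞)`.  Consequently, if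
`x` and `y` are finitely supported real sequences whose norm functions `t ↦ ‖x‖_t` and
`t ↦ ‖y‖_t` on `(0,∞)` are not identical, then `{t ∈ (0,∞) : ‖x‖_t = ‖y‖_t}` is finite. -/
theorem finite_zeros_exponential_sum (K : ℕ) (hK : 0 < K) (a b : Fin K → ℝ)
    (ha : ∀ k, a k ≠ 0) (hb : ∀ k, 0 < b k) (hmono : StrictAnti b) :
    {t ∈ Set.Ioi (0 : ℝ) | ∑ k, a k * b k ^ t = 0}.Finite ∧
      ∀ x y : ℕ →₀ ℝ, (∃ t : ℝ, 0 < t ∧ ltNorm x t ≠ ltNorm y t) →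
        {t ∈ Set.Ioi (0 : ℝ) | ltNorm x t = ltNorm y t}.Finite := by
  classical
  constructor
  · -- part 1
    have hne : Nonempty (Fin K) := ⟨⟨0, hK⟩⟩
    have hbinj : Function.Injective b := hmono.injective
    set B : Finset ℝ := Finset.univ.image b with hB
    set c : ℝ → ℝ := fun β => a (Function.invFun b β) with hcdef
    have hcb : ∀ k, c (b k) = a k := by
      intro k; simp only [hcdef]; rw [Function.leftInverse_invFun hbinj k]
    have hsum : ∀ t : ℝ, ∑ β ∈ B, c β * β ^ t = ∑ k, a k * b k ^ t := by
      intro t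
      rw [hB, Finset.sum_image (fun k _ l _ h => hbinj h)]
      exact Finset.sum_congr rfl fun k _ => by rw [hcb]
    have hset : {t ∈ Set.Ioi (0 : ℝ) | ∑ k, a k * b k ^ t = 0}
        = {t ∈ Set.Ioi (0:ℝ) | ∑ β ∈ B, c β * β ^ t = 0} := by
      ext t; simp [hsum t]
    rw [hset]
    apply expsum_finite_zeros
    · exact ⟨b ⟨0, hK⟩, Finset.mem_image_of_mem b (Finset.mem_univ _)⟩
    · intro β hβ
      obtain ⟨k, _, rfl⟩ := Finset.mem_image.1 hβ
      exact hb k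
    · intro β hβ
      obtain ⟨k, _, rfl⟩ := Finset.mem_image.1 hβ
      rw [hcb]; exact ha k
  · -- part 2
    intro x y hxy
    obtain ⟨t₀, ht₀, hne₀⟩ := hxy
    set Bx : Finset ℝ := x.support.image (fun n => |x n|) with hBx
    set By : Finset ℝ := y.support.image (fun n => |y n|) with hBy
    set B : Finset ℝ := Bx ∪ By with hBdef
    set cx : ℝ → ℝ := fun β => ((x.support.filter (fun n => |x n| = β)).card : ℝ) with hcx
    set cy : ℝ → ℝ := fun β => ((y.support.filter (fun n => |y n| = β)).card : ℝ) with hcy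
    set c : ℝ → ℝ := fun β => cx β - cy β with hcdef
    -- rewriting the sums
    have hxsum : ∀ t : ℝ, ∑ β ∈ B, cx β * β ^ t = ∑ n ∈ x.support, |x n| ^ t := by
      intro t
      have h1 : ∑ n ∈ x.support, |x n| ^ t
          = ∑ β ∈ Bx, (x.support.filter (fun n => |x n| = β)).card • (β ^ t) :=
        Finset.sum_comp (fun β : ℝ => β ^ t) (fun n => |x n|)
      rw [h1]
      rw [← Finset.sum_subset (Finset.subset_union_left : Bx ⊆ B)]
      · exact Finset.sum_congr rfl fun β _ => by rw [nsmul_eq_mul]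
      · intro β _ hβ
        have : x.support.filter (fun n => |x n| = β) = ∅ := by
          rw [Finset.filter_eq_empty_iff]
          intro n hn hc
          exact hβ (Finset.mem_image.2 ⟨n, hn, hc⟩)
        simp [hcx, this]
    have hysum : ∀ t : ℝ, ∑ β ∈ B, cy β * β ^ t = ∑ n ∈ y.support, |y n| ^ t := by
      intro t
      have h1 : ∑ n ∈ y.support, |y n| ^ t
          = ∑ β ∈ By, (y.support.filter (fun n => |y n| = β)).card • (β ^ t) :=
        Finset.sum_comp (fun β : ℝ => β ^ t) (fun n => |y n|)
      rw [h1]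
      rw [← Finset.sum_subset (Finset.subset_union_right : By ⊆ B)]
      · exact Finset.sum_congr rfl fun β _ => by rw [nsmul_eq_mul]
      · intro β _ hβ
        have : y.support.filter (fun n => |y n| = β) = ∅ := by
          rw [Finset.filter_eq_empty_iff]
          intro n hn hc
          exact hβ (Finset.mem_image.2 ⟨n, hn, hc⟩)
        simp [hcy, this]
    have key : ∀ t : ℝ, ∑ β ∈ B, c β * β ^ t
        = (∑ n ∈ x.support, |x n| ^ t) - ∑ n ∈ y.support, |y n| ^ t := by
      intro t
      rw [← hxsum t, ← hysum t, ← Finset.sum_sub_distrib]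
      exact Finset.sum_congr rfl fun β _ => by rw [hcdef]; ring
    -- positivity of bases
    have hposB : ∀ β ∈ B, (0:ℝ) < β := by
      intro β hβ
      rcases Finset.mem_union.1 hβ with h | h
      · obtain ⟨n, hn, rfl⟩ := Finset.mem_image.1 h
        exact abs_pos.2 (Finsupp.mem_support_iff.1 hn)
      · obtain ⟨n, hn, rfl⟩ := Finset.mem_image.1 h
        exact abs_pos.2 (Finsupp.mem_support_iff.1 hn)
    -- sums nonneg and norm equality iff sum equality (t > 0)
    have hsum_eq_of_norm : ∀ t : ℝ, 0 < t → ltNorm x t = ltNorm y t →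
        (∑ n ∈ x.support, |x n| ^ t) = ∑ n ∈ y.support, |y n| ^ t := by
      intro t ht hnorm
      have hSx : (0:ℝ) ≤ ∑ n ∈ x.support, |x n| ^ t :=
        Finset.sum_nonneg fun n _ => Real.rpow_nonneg (abs_nonneg _) t
      have hSy : (0:ℝ) ≤ ∑ n ∈ y.support, |y n| ^ t :=
        Finset.sum_nonneg fun n _ => Real.rpow_nonneg (abs_nonneg _) t
      have h1 : ((∑ n ∈ x.support, |x n| ^ t) ^ (1/t)) ^ t = ∑ n ∈ x.support, |x n| ^ t := by
        rw [← Real.rpow_mul hSx, one_div_mul_cancel ht.ne', Real.rpow_one]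
      have h2 : ((∑ n ∈ y.support, |y n| ^ t) ^ (1/t)) ^ t = ∑ n ∈ y.support, |y n| ^ t := by
        rw [← Real.rpow_mul hSy, one_div_mul_cancel ht.ne', Real.rpow_one]
      rw [← h1, ← h2]
      unfold ltNorm at hnorm
      rw [hnorm]
    have hnorm_of_sum : ∀ t : ℝ, (∑ n ∈ x.support, |x n| ^ t) = ∑ n ∈ y.support, |y n| ^ t →
        ltNorm x t = ltNorm y t := by
      intro t h; unfold ltNorm; rw [h]
    -- f t₀ ≠ 0
    have hft₀ : ∑ β ∈ B, c β * β ^ t₀ ≠ 0 := by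
      rw [key t₀, sub_ne_zero]
      exact fun h => hne₀ (hnorm_of_sum t₀ h)
    -- restrict to nonzero coefficients
    set B' : Finset ℝ := B.filter (fun β => c β ≠ 0) with hB'
    have hfilter : ∀ t : ℝ, ∑ β ∈ B', c β * β ^ t = ∑ β ∈ B, c β * β ^ t := by
      intro t
      apply Finset.sum_filter_of_ne
      intro β _ hne hc0
      exact hne (by rw [hc0, zero_mul])
    have hB'ne : B'.Nonempty := by
      rw [Finset.nonempty_iff_ne_empty]
      intro h
      apply hft₀
      rw [← hfilter t₀, h, Finset.sum_empty]
    have hfin : {t ∈ Set.Ioi (0:ℝ) | ∑ β ∈ B', c β * β ^ t = 0}.Finite := by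
      apply expsum_finite_zeros B' hB'ne
      · exact fun β hβ => hposB β (Finset.mem_of_mem_filter β hβ)
      · exact fun β hβ => (Finset.mem_filter.1 hβ).2
    apply hfin.subset
    rintro t ⟨ht, hnorm⟩
    refine ⟨ht, ?_⟩
    rw [hfilter t, key t, sub_eq_zero]
    exact hsum_eq_of_norm t ht hnorm
end

section
/- Let G be a multiplicatively written abelian group, let φ : G → [0,∞) be a height on G, fix α ∈ G, and let 0 ≤ a < b ≤ ∞. Then the open interval (a,b) is uniform (for φ and α) if and only if every point of (a,b) is standard relative to (a,b). -/
open scoped BigOperators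

/-- The power sum `t ↦ ∑ |xₙ|^t` associated to a finitely supported sequence. -/
noncomputable def powSum (x : ℕ →₀ ℝ) (t : ℝ) : ℝ :=
  ∑ n ∈ x.support, |x n| ^ t

lemma powSum_nonneg (x : ℕ →₀ ℝ) (t : ℝ) : 0 ≤ powSum x t :=
  Finset.sum_nonneg fun n _ => Real.rpow_nonneg (abs_nonneg _) _

lemma ltNorm_eq_powSum (x : ℕ →₀ ℝ) (t : ℝ) : ltNorm x t = powSum x t ^ (1 / t) := rfl

lemma analyticOnNhd_powSum (x : ℕ →₀ ℝ) :
    AnalyticOnNhd ℝ (powSum x) Set.univ := by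
  have : AnalyticOnNhd ℝ (fun t : ℝ => ∑ n ∈ x.support, |x n| ^ t) Set.univ := by
    apply Finset.analyticOnNhd_fun_sum
    intro n hn
    have hpos : 0 < |x n| := abs_pos.mpr (Finsupp.mem_support_iff.mp hn)
    have heq : (fun t : ℝ => |x n| ^ t) =
        fun t : ℝ => Real.exp (Real.log |x n| * t) := by
      funext t
      exact Real.rpow_def_of_pos hpos t
    show AnalyticOnNhd ℝ (fun t : ℝ => |x n| ^ t) Set.univ
    rw [heq]
    exact analyticOnNhd_rexp.comp
      ((analyticOnNhd_const.mul analyticOnNhd_id)) (Set.mapsTo_univ _ _)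
  exact this

/-- If the `L_t` norms of two sequences agree on a nonempty open set, they agree
everywhere. -/
lemma ltNorm_eq_of_eqOn_open (x y : ℕ →₀ ℝ) (U : Set ℝ) (hU : IsOpen U)
    (hne : U.Nonempty) (h : ∀ t ∈ U, ltNorm x t = ltNorm y t) :
    ∀ t : ℝ, ltNorm x t = ltNorm y t := by
  -- find a nonzero point of U
  obtain ⟨t, ht⟩ := hne
  obtain ⟨z₀, hz₀U, hz₀⟩ : ∃ z₀, z₀ ∈ U ∧ z₀ ≠ 0 := by
    by_cases h0 : t = 0
    · obtain ⟨ε, hε, hball⟩ := Metric.isOpen_iff.mp hU t ht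
      refine ⟨t + ε / 2, hball ?_, ?_⟩
      · rw [Metric.mem_ball, Real.dist_eq, add_sub_cancel_left,
          abs_of_pos (half_pos hε)]
        exact half_lt_self hε
      · rw [h0]; positivity
    · exact ⟨t, ht, h0⟩
  -- powSum x = powSum y on U \ {0}
  have hV : IsOpen (U ∩ {s : ℝ | s ≠ 0}) :=
    hU.inter (isOpen_compl_singleton (x := (0 : ℝ)))
  have hVeq : ∀ s ∈ U ∩ {s : ℝ | s ≠ 0}, powSum x s = powSum y s := by
    rintro s ⟨hsU, hs0⟩
    have h1 : powSum x s = (powSum x s ^ s⁻¹) ^ s :=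
      (Real.rpow_inv_rpow (powSum_nonneg x s) hs0).symm
    have h2 : powSum y s = (powSum y s ^ s⁻¹) ^ s :=
      (Real.rpow_inv_rpow (powSum_nonneg y s) hs0).symm
    rw [h1, h2]
    have := h s hsU
    rw [ltNorm_eq_powSum, ltNorm_eq_powSum, one_div] at this
    rw [this]
  have hfg : powSum x =ᶠ[nhds z₀] powSum y :=
    Filter.eventuallyEq_of_mem (hV.mem_nhds ⟨hz₀U, hz₀⟩) hVeq
  have : powSum x = powSum y :=
    (analyticOnNhd_powSum x).eq_of_eventuallyEq (analyticOnNhd_powSum y) hfg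
  intro s
  rw [ltNorm_eq_powSum, ltNorm_eq_powSum, this]

/-- Let `φ` be a height on `G`, `α ∈ G`, and `0 ≤ a < b ≤ ∞`.  The open interval `(a,b)`
is uniform (for `φ` and `α`) if and only if every point of `(a,b)` is standard relative
to `(a,b)`. -/
theorem uniform_iff_forall_standard {G : Type*} [CommGroup G] (φ : G → ℝ)
    (hφ : IsHeight φ) (α : G) (a : ℝ) (b : EReal) (ha : 0 ≤ a) (hab : (a : EReal) < b) :
    IsUniform φ α {t : ℝ | a < t ∧ (t : EReal) < b} ↔
      ∀ t : ℝ, a < t → (t : EReal) < b →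
        IsStandardPt φ α {s : ℝ | a < s ∧ (s : EReal) < b} t := by
  set I : Set ℝ := {s : ℝ | a < s ∧ (s : EReal) < b} with hIdef
  have hIopen : IsOpen I := by
    have : I = Set.Ioi a ∩ ((↑) : ℝ → EReal) ⁻¹' Set.Iio b := by
      ext s; simp [hIdef, Set.mem_Ioi, Set.mem_Iio]
    rw [this]
    exact isOpen_Ioi.inter (continuous_coe_real_ereal.isOpen_preimage _ isOpen_Iio)
  have hIord : I.OrdConnected := by
    constructor
    rintro s ⟨has, hsb⟩ v ⟨hav, hvb⟩ u ⟨hsu, huv⟩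
    exact ⟨lt_of_lt_of_le has hsu,
      lt_of_le_of_lt (EReal.coe_le_coe_iff.mpr huv) hvb⟩
  constructor
  · rintro ⟨x, hx⟩ t hat htb
    exact ⟨I, subset_rfl, hIopen, hIord, ⟨hat, htb⟩, x, hx⟩
  · intro H
    -- find a point t0 ∈ I
    obtain ⟨c, hac, hcb⟩ := exists_between hab
    have hcT : c ≠ ⊤ := (lt_of_lt_of_le hcb le_top).ne
    have hcB : c ≠ ⊥ := (lt_trans (bot_lt_iff_ne_bot.mpr (EReal.coe_ne_bot a)) hac).ne'
    set t0 : ℝ := c.toReal with ht0def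
    have hct0 : (t0 : EReal) = c := EReal.coe_toReal hcT hcB
    have ht0I : t0 ∈ I := by
      constructor
      · exact_mod_cast hct0 ▸ hac
      · rw [hct0]; exact hcb
    obtain ⟨J0, hJ0I, hJ0open, _, ht0J0, x0, hx0⟩ := H t0 ht0I.1 ht0I.2
    -- the set of points covered by an open patch on which mv = ‖x0‖
    set S : Set ℝ := {s : ℝ | ∃ J : Set ℝ, IsOpen J ∧ J ⊆ I ∧ s ∈ J ∧
      ∀ u ∈ J, metricVersion φ u α = ltNorm x0 u} with hSdef
    have hSsubI : S ⊆ I := by rintro s ⟨J, _, hJI, hsJ, _⟩; exact hJI hsJ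
    have hSopen : IsOpen S := by
      rw [isOpen_iff_forall_mem_open]
      rintro s ⟨J, hJo, hJI, hsJ, hJeq⟩
      exact ⟨J, fun u hu => ⟨J, hJo, hJI, hu, hJeq⟩, hJo, hsJ⟩
    have ht0S : t0 ∈ S := ⟨J0, hJ0open, hJ0I, ht0J0, hx0⟩
    -- S is closed in I
    have hclosed : ∀ t ∈ I, t ∈ closure S → t ∈ S := by
      intro t htI htc
      obtain ⟨J, hJI, hJopen, _, htJ, y, hy⟩ := H t htI.1 htI.2
      obtain ⟨s, hsJ, hsS⟩ :=
        mem_closure_iff_nhds.mp htc J (hJopen.mem_nhds htJ)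
      obtain ⟨J', hJ'o, hJ'I, hsJ', hJ'eq⟩ := hsS
      have hUo : IsOpen (J ∩ J') := hJopen.inter hJ'o
      have hUne : (J ∩ J').Nonempty := ⟨s, hsJ, hsJ'⟩
      have hUeq : ∀ u ∈ J ∩ J', ltNorm y u = ltNorm x0 u := by
        rintro u ⟨huJ, huJ'⟩
        rw [← hy u huJ, hJ'eq u huJ']
      have hyx0 : ∀ u : ℝ, ltNorm y u = ltNorm x0 u :=
        ltNorm_eq_of_eqOn_open y x0 _ hUo hUne hUeq
      exact ⟨J, hJopen, hJI, htJ, fun u hu => (hy u hu).trans (hyx0 u)⟩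
    -- connectedness argument
    have hpre : IsPreconnected I := hIord.isPreconnected
    have hIS : I ⊆ S := by
      by_contra hns
      have hV : (I ∩ (closure S)ᶜ).Nonempty := by
        obtain ⟨u, huI, huS⟩ := Set.not_subset.mp hns
        exact ⟨u, huI, fun huc => huS (hclosed u huI huc)⟩
      have hcover : I ⊆ S ∪ (closure S)ᶜ := by
        intro u huI
        by_cases hu : u ∈ closure S
        · exact Or.inl (hclosed u huI hu)
        · exact Or.inr hu
      obtain ⟨u, _, huS, huc⟩ := hpre S (closure S)ᶜ hSopen
        isClosed_closure.isOpen_compl hcover ⟨t0, ht0I, ht0S⟩ hV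
      exact huc (subset_closure huS)
    refine ⟨x0, fun t htI => ?_⟩
    obtain ⟨J, _, _, htJ, hJeq⟩ := hIS htI
    exact hJeq t htJ
end

section
/- Let G be a countable multiplicatively written abelian group, let φ : G → [0,∞) be a height on G, fix α ∈ G, and let K ⊆ (0,∞) be an uncountable set such that for every t ∈ K the infimum in the definition of φ_t(α) is attained. Then K is uniform if and only if there exist N ∈ ℕ and α_1, …, α_N ∈ G such that α = ∏_{n=1}^N α_n and φ_t(α) = (∑_{n=1}^N φ(α_n)^t)^(1/t) for all t ∈ K. -/
open scoped BigOperators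

/-- For `0 ≤ a`, the function `t ↦ a ^ t` is analytic on `(0, ∞)`. -/
lemma analyticOnNhd_rpow_const {a : ℝ} (ha : 0 ≤ a) :
    AnalyticOnNhd ℝ (fun t : ℝ => a ^ t) (Set.Ioi 0) := by
  rcases ha.eq_or_lt with h | h
  · intro t₀ ht₀
    have : (fun _ : ℝ => (0:ℝ)) =ᶠ[nhds t₀] fun t : ℝ => a ^ t := by
      have hne : {t : ℝ | t ≠ 0} ∈ nhds t₀ :=
        isOpen_ne.mem_nhds (ne_of_gt (Set.mem_Ioi.1 ht₀))
      filter_upwards [hne] with t htne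
      rw [← h, Real.zero_rpow htne]
    exact analyticAt_const.congr this
  · have : (fun t : ℝ => a ^ t) = fun t : ℝ => Real.exp (Real.log a * t) := by
      funext t
      rw [Real.rpow_def_of_pos h]
    rw [this]
    intro t₀ _
    exact (analyticAt_const.mul analyticAt_id).rexp

/-- An uncountable subset of `(0, ∞)` has an accumulation point in `(0, ∞)`. -/
lemma exists_accPt_of_uncountable' {S : Set ℝ} (hS : S ⊆ Set.Ioi 0)
    (hunc : ¬ S.Countable) :
    ∃ z₀ ∈ Set.Ioi (0:ℝ), AccPt z₀ (Filter.principal S) := by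
  obtain ⟨n, hn⟩ : ∃ n : ℕ, ¬ (S ∩ Set.Icc ((n:ℝ)+1)⁻¹ ((n:ℝ)+1)).Countable := by
    by_contra h
    push_neg at h
    apply hunc
    have hcov : S ⊆ ⋃ n : ℕ, (S ∩ Set.Icc ((n:ℝ)+1)⁻¹ ((n:ℝ)+1)) := by
      intro t ht
      have ht0 : (0 : ℝ) < t := hS ht
      obtain ⟨n, hn1, hn2⟩ : ∃ n : ℕ, t⁻¹ ≤ (n:ℝ)+1 ∧ t ≤ (n:ℝ)+1 := by
        obtain ⟨n, hn⟩ := exists_nat_ge (max t⁻¹ t)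
        exact ⟨n, (le_max_left _ _).trans (hn.trans (by linarith)),
          (le_max_right _ _).trans (hn.trans (by linarith))⟩
      exact Set.mem_iUnion.2 ⟨n, ht, inv_le_of_inv_le₀ ht0 hn1, hn2⟩
    exact (Set.countable_iUnion h).mono hcov
  have hinf : (S ∩ Set.Icc ((n:ℝ)+1)⁻¹ ((n:ℝ)+1)).Infinite := fun hfin => hn hfin.countable
  obtain ⟨z₀, hz₀K, hz₀acc⟩ := hinf.exists_accPt_of_subset_isCompact isCompact_Icc
    Set.inter_subset_right
  exact ⟨z₀, lt_of_lt_of_le (by positivity) hz₀K.1,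
    hz₀acc.mono (Filter.principal_mono.2 Set.inter_subset_left)⟩

/-- Two finite sums of powers `t ↦ ∑ aᵢᵗ` agreeing on an uncountable subset of `(0,∞)`
agree on all of `(0,∞)`. -/
lemma eqOn_sum_rpow {ι κ : Type*} (s : Finset ι) (u : Finset κ) (a : ι → ℝ) (b : κ → ℝ)
    (ha : ∀ i, 0 ≤ a i) (hb : ∀ j, 0 ≤ b j) (S : Set ℝ) (hS : S ⊆ Set.Ioi 0)
    (hunc : ¬ S.Countable)
    (h : ∀ t ∈ S, ∑ i ∈ s, a i ^ t = ∑ j ∈ u, b j ^ t) :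
    ∀ t ∈ Set.Ioi (0:ℝ), ∑ i ∈ s, a i ^ t = ∑ j ∈ u, b j ^ t := by
  have hFan : AnalyticOnNhd ℝ (fun t : ℝ => ∑ i ∈ s, a i ^ t) (Set.Ioi 0) :=
    Finset.analyticOnNhd_fun_sum s fun i _ => analyticOnNhd_rpow_const (ha i)
  have hGan : AnalyticOnNhd ℝ (fun t : ℝ => ∑ j ∈ u, b j ^ t) (Set.Ioi 0) :=
    Finset.analyticOnNhd_fun_sum u fun j _ => analyticOnNhd_rpow_const (hb j)
  obtain ⟨z₀, hz₀, hacc⟩ := exists_accPt_of_uncountable' hS hunc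
  have hfreq : ∃ᶠ z in nhdsWithin z₀ {z₀}ᶜ,
      (fun t : ℝ => ∑ i ∈ s, a i ^ t) z = (fun t : ℝ => ∑ j ∈ u, b j ^ t) z := by
    rw [frequently_nhdsWithin_iff]
    exact (accPt_iff_frequently.1 hacc).mono fun y hy =>
      ⟨h y hy.2, Set.mem_compl_singleton_iff.2 hy.1⟩
  have hEq := hFan.eqOn_of_preconnected_of_frequently_eq hGan isPreconnected_Ioi hz₀ hfreq
  exact fun t ht => hEq ht

/-- Let `G` be a countable abelian group, `φ` a height on `G`, `α ∈ G`, and `K ⊆ (0,∞)`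
an uncountable set such that the infimum in the definition of `φ_t(α)` is attained for
every `t ∈ K`.  Then `K` is uniform if and only if there is a single factorization
`α = ∏ₙ αₙ` with `φ_t(α) = (∑ₙ φ(αₙ)^t)^(1/t)` for all `t ∈ K`. -/
theorem uniform_iff_single_factorization {G : Type*} [CommGroup G] [Countable G]
    (φ : G → ℝ) (hφ : IsHeight φ) (α : G) (K : Set ℝ) (hK : K ⊆ Set.Ioi 0)
    (hKunc : ¬ K.Countable) (hatt : ∀ t ∈ K, InfAttained φ t α) :
    IsUniform φ α K ↔
      ∃ (N : ℕ) (f : Fin (N + 1) → G), α = ∏ i, f i ∧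
        ∀ t ∈ K, metricVersion φ t α = (∑ i, φ (f i) ^ t) ^ (1 / t) := by
  constructor
  · rintro ⟨x, hx⟩
    set A : (Σ N : ℕ, (Fin (N + 1) → G)) → Set ℝ := fun p =>
      {t | t ∈ K ∧ α = ∏ i, p.2 i ∧
        metricVersion φ t α = (∑ i, φ (p.2 i) ^ t) ^ (1 / t)} with hA
    have hcover : K ⊆ ⋃ p, A p := by
      intro t ht
      obtain ⟨N, f, hf1, hf2⟩ := hatt t ht
      exact Set.mem_iUnion.2 ⟨⟨N, f⟩, ht, hf1, hf2⟩
    obtain ⟨p, hp⟩ : ∃ p, ¬ (A p).Countable := by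
      by_contra h
      push_neg at h
      exact hKunc ((Set.countable_iUnion h).mono hcover)
    obtain ⟨N, f⟩ := p
    have hne : (A ⟨N, f⟩).Nonempty := by
      rcases Set.eq_empty_or_nonempty (A ⟨N, f⟩) with h | h
      · exact absurd (h ▸ Set.countable_empty) hp
      · exact h
    obtain ⟨t₁, ht₁⟩ := hne
    refine ⟨N, f, ht₁.2.1, ?_⟩
    have hsum : ∀ t ∈ A ⟨N, f⟩, ∑ i, φ (f i) ^ t = ∑ n ∈ x.support, |x n| ^ t := by
      intro t ht
      have ht0 : (0 : ℝ) < t := hK ht.1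
      have h1 : (∑ i, φ (f i) ^ t) ^ (1 / t) = (∑ n ∈ x.support, |x n| ^ t) ^ (1 / t) := by
        have h2 : metricVersion φ t α = (∑ i, φ (f i) ^ t) ^ (1 / t) := ht.2.2
        rw [← h2, hx t ht.1]
        rfl
      have h3 := congrArg (fun y : ℝ => y ^ t) h1
      simpa only [one_div,
        Real.rpow_inv_rpow (Finset.sum_nonneg fun i _ =>
          Real.rpow_nonneg (hφ.1 (f i)) t) ht0.ne',
        Real.rpow_inv_rpow (Finset.sum_nonneg fun n _ =>
          Real.rpow_nonneg (abs_nonneg _) t) ht0.ne'] using h3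
    have hall := eqOn_sum_rpow Finset.univ x.support (fun i => φ (f i)) (fun n => |x n|)
      (fun i => hφ.1 (f i)) (fun n => abs_nonneg _) (A ⟨N, f⟩) (fun t ht => hK ht.1) hp hsum
    intro t ht
    rw [hx t ht]
    exact congrArg (fun y : ℝ => y ^ (1 / t)) (hall t (hK ht)).symm
  · rintro ⟨N, f, hprod, hval⟩
    classical
    refine ⟨Finsupp.onFinset (Finset.range (N + 1))
      (fun n => if h : n < N + 1 then φ (f ⟨n, h⟩) else 0)
      (fun n hn => Finset.mem_range.2 (by
        by_contra hc
        exact hn (by simp [hc]))), ?_⟩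
    set x : ℕ →₀ ℝ := Finsupp.onFinset (Finset.range (N + 1))
      (fun n => if h : n < N + 1 then φ (f ⟨n, h⟩) else 0)
      (fun n hn => Finset.mem_range.2 (by
        by_contra hc
        exact hn (by simp [hc]))) with hxdef
    intro t ht
    have ht0 : (0 : ℝ) < t := hK ht
    rw [hval t ht, ltNorm]
    congr 1
    have hsupp : x.support ⊆ Finset.range (N + 1) := Finsupp.support_onFinset_subset
    have hzero : ∀ n ∈ Finset.range (N + 1), n ∉ x.support → |x n| ^ t = 0 := by
      intro n _ hns
      rw [Finsupp.notMem_support_iff.1 hns, abs_zero, Real.zero_rpow ht0.ne']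
    rw [Finset.sum_subset hsupp hzero,
      ← Fin.sum_univ_eq_sum_range (fun n => |x n| ^ t) (N + 1)]
    apply Finset.sum_congr rfl
    intro i _
    have hxi : x (i : ℕ) = φ (f i) := by
      simp [hxdef, Finsupp.onFinset_apply, i.isLt, not_lt.2 i.is_le]
    rw [hxi, abs_of_nonneg (hφ.1 (f i))]
end

section
/- Let G be a countable multiplicatively written abelian group, let φ : G → [0,∞) be a height on G, fix α ∈ G, and let I ⊆ (0,∞) be an open interval such that the infimum in the definition of φ_t(α) is attained for every t ∈ I. Then the following are equivalent: (i) there exists a finite set 𝒳 of finitely supported real sequences such that φ_t(α) = min{‖x‖_t : x ∈ 𝒳} for all t ∈ I; (ii) I contains only finitely many exceptional points; (iii) there exists a finite set R ⊆ G containing the identity that replaces G at every t ∈ I; (iv) there exists a set S ⊆ G containing the identity, with φ(S) finite, that replaces G at every t ∈ I. -/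
open scoped BigOperators

namespace URT

open Real Set

noncomputable def expSum (Λ : Finset ℝ) (c : ℝ → ℝ) (s : ℝ) : ℝ :=
  ∑ l ∈ Λ, c l * Real.exp (l * s)

theorem expSum_hasDerivAt (Λ : Finset ℝ) (c : ℝ → ℝ) (s : ℝ) :
    HasDerivAt (expSum Λ c) (expSum Λ (fun l => c l * l) s) s := by
  have : ∀ l ∈ Λ, HasDerivAt (fun s => c l * Real.exp (l * s)) (c l * l * Real.exp (l * s)) s := by
    intro l _
    have h1 : HasDerivAt (fun s : ℝ => l * s) l s := by
      simpa using (hasDerivAt_id s).const_mul l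
    have := h1.exp.const_mul (c l)
    rw [show c l * l * Real.exp (l * s) = c l * (Real.exp (l * s) * l) by ring]
    exact this
  have : HasDerivAt (fun y => ∑ l ∈ Λ, c l * Real.exp (l * y)) (∑ l ∈ Λ, c l * l * Real.exp (l * s)) s :=
    HasDerivAt.fun_sum (fun l hl => this l hl)
  exact this

theorem deriv_zeros_infinite {f f' : ℝ → ℝ} (hd : ∀ x, HasDerivAt f (f' x) x)
    (hz : {x | f x = 0}.Infinite) : {x | f' x = 0}.Infinite := by
  by_contra hfin
  rw [Set.not_infinite] at hfin
  set n := hfin.toFinset.card with hn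
  obtain ⟨T, hTsub, hTfin, hTcard⟩ := hz.exists_subset_ncard_eq (n + 2)
  have hTc : hTfin.toFinset.card = n + 2 := by
    rw [← Set.ncard_eq_toFinset_card T hTfin]; exact hTcard
  let e := hTfin.toFinset.orderIsoOfFin hTc
  have hmemT : ∀ x : (hTfin.toFinset : Finset ℝ), (x : ℝ) ∈ T := by
    intro x
    have := x.2
    rwa [Set.Finite.mem_toFinset] at this
  have key : ∀ i : Fin (n + 1), ∃ w, w ∈ Set.Ioo (e i.castSucc : ℝ) (e i.succ : ℝ) ∧ f' w = 0 := by
    intro i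
    have hlt : (e i.castSucc : ℝ) < e i.succ := by
      exact_mod_cast e.strictMono (Fin.castSucc_lt_succ (i := i))
    have hfa : f (e i.castSucc) = f (e i.succ) := by
      have h1 := hTsub (hmemT (e i.castSucc))
      have h2 := hTsub (hmemT (e i.succ))
      simp only [Set.mem_setOf_eq] at h1 h2
      rw [h1, h2]
    obtain ⟨w, hw, hw0⟩ := exists_hasDerivAt_eq_zero hlt
      (fun x _ => (hd x).continuousAt.continuousWithinAt) hfa (fun x _ => hd x)
    exact ⟨w, hw, hw0⟩
  choose w hw hw0 using key
  have hwmono : StrictMono w := by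
    intro i j hij
    calc w i < (e i.succ : ℝ) := (hw i).2
    _ ≤ (e j.castSucc : ℝ) := by
        exact_mod_cast (e.monotone (Fin.succ_le_castSucc_iff.mpr hij))
    _ < w j := (hw j).1
  have : Function.Injective (fun i : Fin (n+1) => (⟨w i, by rw [Set.Finite.mem_toFinset]; exact hw0 i⟩ : hfin.toFinset)) := by
    intro i j hij
    exact hwmono.injective (congrArg Subtype.val hij)
  have hle := Fintype.card_le_of_injective _ this
  simp only [Fintype.card_coe, Fintype.card_fin] at hle
  omega

theorem expSum_eq_zero_aux (N : ℕ) : ∀ (Λ : Finset ℝ) (c : ℝ → ℝ), Λ.card = N →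
    {s : ℝ | expSum Λ c s = 0}.Infinite → ∀ s, expSum Λ c s = 0 := by
  induction N using Nat.strong_induction_on with
  | _ N ih =>
  intro Λ c hN h
  rcases Finset.eq_empty_or_nonempty Λ with rfl | ⟨l0, hl0⟩
  · intro s; simp [expSum]
  · -- shift by l0
    set Λ' := Λ.image (fun l => l - l0) with hΛ'
    set c' : ℝ → ℝ := fun μ => c (μ + l0) with hc'
    have hshift : ∀ s, expSum Λ' c' s = expSum Λ c s * Real.exp (-(l0 * s)) := by
      intro s
      rw [hΛ', expSum, Finset.sum_image (fun a _ b _ hab => by simpa using sub_left_injective hab)]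
      rw [expSum, Finset.sum_mul]
      apply Finset.sum_congr rfl
      intro l _
      rw [hc']
      simp only [sub_add_cancel]
      rw [mul_assoc, ← Real.exp_add]
      ring_nf
    have hz' : {s : ℝ | expSum Λ' c' s = 0}.Infinite := by
      apply Set.Infinite.mono _ h
      intro s hs
      simp only [Set.mem_setOf_eq] at hs ⊢
      rw [hshift, hs, zero_mul]
    -- derivative
    have hd : ∀ s, HasDerivAt (expSum Λ' c') (expSum Λ' (fun μ => c' μ * μ) s) s :=
      expSum_hasDerivAt Λ' c'
    have h0mem : (0:ℝ) ∈ Λ' := by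
      rw [hΛ', Finset.mem_image]; exact ⟨l0, hl0, sub_self l0⟩
    have herase : ∀ s, expSum Λ' (fun μ => c' μ * μ) s = expSum (Λ'.erase 0) (fun μ => c' μ * μ) s := by
      intro s
      rw [expSum, expSum, eq_comm]
      apply Finset.sum_erase
      simp
    have hcard' : (Λ'.erase 0).card < N := by
      have h1 : Λ'.card = N := by
        rw [hΛ', Finset.card_image_of_injective _ (fun a b hab => by simpa using sub_left_injective hab), hN]
      have h2 := Finset.card_erase_of_mem h0mem
      have hpos : 0 < Λ'.card := Finset.card_pos.mpr ⟨0, h0mem⟩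
      omega
    have hzderiv : {s : ℝ | expSum (Λ'.erase 0) (fun μ => c' μ * μ) s = 0}.Infinite := by
      have := deriv_zeros_infinite hd hz'
      apply Set.Infinite.mono _ this
      intro s hs
      simp only [Set.mem_setOf_eq] at hs ⊢
      rw [← herase]; exact hs
    have hder0 : ∀ s, expSum (Λ'.erase 0) (fun μ => c' μ * μ) s = 0 :=
      ih _ hcard' _ _ rfl hzderiv
    -- so expSum Λ' c' has zero derivative everywhere: constant
    have hconst : ∀ s₁ s₂ : ℝ, expSum Λ' c' s₁ = expSum Λ' c' s₂ := by
      intro s₁ s₂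
      apply is_const_of_deriv_eq_zero (f := expSum Λ' c')
      · intro x; exact (hd x).differentiableAt
      · intro x
        rw [(hd x).deriv, herase, hder0]
    obtain ⟨s0, hs0⟩ := hz'.nonempty
    have hzero : ∀ s, expSum Λ' c' s = 0 := by
      intro s; rw [hconst s s0]; exact hs0
    intro s
    have := hzero s
    rw [hshift s] at this
    have hne := Real.exp_ne_zero (-(l0 * s))
    exact (mul_eq_zero.mp this).resolve_right hne

theorem expSum_eq_zero {Λ : Finset ℝ} {c : ℝ → ℝ}
    (h : {s : ℝ | expSum Λ c s = 0}.Infinite) : ∀ s, expSum Λ c s = 0 :=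
  expSum_eq_zero_aux Λ.card Λ c rfl h


noncomputable def PS (x : ℕ →₀ ℝ) (s : ℝ) : ℝ := ∑ n ∈ x.support, |x n| ^ s

theorem ltNorm_eq_PS (x : ℕ →₀ ℝ) (s : ℝ) : ltNorm x s = PS x s ^ (1 / s) := rfl

theorem PS_nonneg (x : ℕ →₀ ℝ) (s : ℝ) : 0 ≤ PS x s :=
  Finset.sum_nonneg fun n _ => Real.rpow_nonneg (abs_nonneg _) s

theorem rpow_one_div_cancel {A : ℝ} (hA : 0 ≤ A) {s : ℝ} (hs : s ≠ 0) :
    (A ^ (1 / s)) ^ s = A := by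
  rw [← Real.rpow_mul hA, one_div_mul_cancel hs, Real.rpow_one]

theorem ltNorm_eq_iff_PS_eq {x y : ℕ →₀ ℝ} {s : ℝ} (hs : s ≠ 0) :
    ltNorm x s = ltNorm y s ↔ PS x s = PS y s := by
  constructor
  · intro h
    rw [ltNorm_eq_PS, ltNorm_eq_PS] at h
    calc PS x s = (PS x s ^ (1 / s)) ^ s := (rpow_one_div_cancel (PS_nonneg x s) hs).symm
    _ = (PS y s ^ (1 / s)) ^ s := by rw [h]
    _ = PS y s := rpow_one_div_cancel (PS_nonneg y s) hs
  · intro h; rw [ltNorm_eq_PS, ltNorm_eq_PS, h]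

noncomputable def lamSet (x : ℕ →₀ ℝ) : Finset ℝ := x.support.image fun n => Real.log |x n|

noncomputable def cnt (x : ℕ →₀ ℝ) (l : ℝ) : ℝ :=
  ((x.support.filter fun n => Real.log |x n| = l).card : ℝ)

theorem PS_eq_expSum (x : ℕ →₀ ℝ) (s : ℝ) : PS x s = expSum (lamSet x) (cnt x) s := by
  have h1 : PS x s = ∑ n ∈ x.support, Real.exp (Real.log |x n| * s) := by
    apply Finset.sum_congr rfl
    intro n hn
    rw [Real.rpow_def_of_pos (abs_pos.mpr (Finsupp.mem_support_iff.mp hn))]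
  rw [h1, ← Finset.sum_fiberwise_of_maps_to (g := fun n => Real.log |x n|)
    (fun n hn => Finset.mem_image_of_mem (fun n => Real.log |x n|) hn)]
  apply Finset.sum_congr rfl
  intro l _
  have hcongr : ∀ n ∈ x.support.filter (fun n => Real.log |x n| = l),
      Real.exp (Real.log |x n| * s) = Real.exp (l * s) := by
    intro n hn
    rw [(Finset.mem_filter.mp hn).2]
  rw [Finset.sum_congr rfl hcongr, Finset.sum_const, nsmul_eq_mul, cnt]

theorem expSum_super {Λ Λ' : Finset ℝ} (hsub : Λ ⊆ Λ') {x : ℕ →₀ ℝ}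
    (hz : ∀ l ∈ Λ', l ∉ Λ → cnt x l = 0) (hΛ : Λ = lamSet x) (s : ℝ) :
    expSum Λ' (cnt x) s = expSum Λ (cnt x) s := by
  rw [expSum, expSum, eq_comm]
  apply Finset.sum_subset hsub
  intro l hl hnl
  rw [hz l hl hnl, zero_mul]

theorem cnt_eq_zero {x : ℕ →₀ ℝ} {l : ℝ} (h : l ∉ lamSet x) : cnt x l = 0 := by
  rw [cnt]
  norm_cast
  rw [Finset.card_eq_zero, Finset.filter_eq_empty_iff]
  intro n hn hl
  exact h (by rw [lamSet, Finset.mem_image]; exact ⟨n, hn, hl⟩)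

/-- Master lemma: two `ltNorm` functions agreeing on an infinite subset of `(0,∞)`
agree on all of `(0,∞)`. -/
theorem ltNorm_eqOn_of_infinite {x y : ℕ →₀ ℝ}
    (h : {s : ℝ | 0 < s ∧ ltNorm x s = ltNorm y s}.Infinite) :
    ∀ s : ℝ, 0 < s → ltNorm x s = ltNorm y s := by
  set Λ := lamSet x ∪ lamSet y with hΛ
  set c : ℝ → ℝ := fun l => cnt x l - cnt y l with hc
  have key : ∀ s, expSum Λ c s = PS x s - PS y s := by
    intro s
    have : expSum Λ c s = expSum Λ (cnt x) s - expSum Λ (cnt y) s := by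
      rw [expSum, expSum, expSum, ← Finset.sum_sub_distrib]
      apply Finset.sum_congr rfl
      intro l _
      rw [hc]; ring
    rw [this,
      expSum_super Finset.subset_union_left (fun l _ hnl => cnt_eq_zero hnl) rfl s,
      expSum_super Finset.subset_union_right (fun l _ hnl => cnt_eq_zero hnl) rfl s,
      ← PS_eq_expSum, ← PS_eq_expSum]
  have hz : {s : ℝ | expSum Λ c s = 0}.Infinite := by
    apply Set.Infinite.mono _ h
    intro s hs
    obtain ⟨hs0, hseq⟩ := hs
    have := (ltNorm_eq_iff_PS_eq (ne_of_gt hs0)).mp hseq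
    simp only [Set.mem_setOf_eq]
    rw [key, this, sub_self]
  have hall := expSum_eq_zero hz
  intro s hs0
  rw [ltNorm_eq_iff_PS_eq (ne_of_gt hs0)]
  have := hall s
  rw [key] at this
  linarith


noncomputable def finsuppOfList (l : List ℝ) : ℕ →₀ ℝ :=
  Finsupp.onFinset (Finset.range l.length) (fun n => l.getD n 0)
    (fun n hn => by
      rw [Finset.mem_range]
      by_contra h
      push_neg at h
      exact hn (List.getD_eq_default l 0 h))

theorem PS_finsuppOfList (l : List ℝ) (hl : ∀ v ∈ l, 0 ≤ v) {s : ℝ} (hs : s ≠ 0) :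
    PS (finsuppOfList l) s = (l.map (fun v => v ^ s)).sum := by
  have h1 : PS (finsuppOfList l) s = ∑ n ∈ Finset.range l.length, |l.getD n 0| ^ s := by
    rw [PS]
    apply Finset.sum_subset Finsupp.support_onFinset_subset
    intro n _ hn
    rw [show (finsuppOfList l) n = 0 from Finsupp.notMem_support_iff.mp hn]
    simp only [abs_zero]
    exact Real.zero_rpow hs
  rw [h1, ← Fin.sum_univ_eq_sum_range]
  have h2 : ∀ i : Fin l.length, |l.getD (i : ℕ) 0| ^ s = l[(i : ℕ)] ^ s := by
    intro i
    rw [List.getD_eq_getElem l 0 i.2, abs_of_nonneg (hl _ (List.getElem_mem i.2))]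
  rw [Finset.sum_congr rfl (fun i _ => h2 i)]
  have h3 : l.map (fun v => v ^ s) = List.ofFn (fun i : Fin l.length => l[(i : ℕ)] ^ s) := by
    conv_lhs => rw [← List.ofFn_getElem (xs := l)]
    rw [List.map_ofFn]
    rfl
  rw [h3, List.sum_ofFn]

noncomputable def vecOf {G : Type*} (φ : G → ℝ) {N : ℕ} (f : Fin (N + 1) → G) : ℕ →₀ ℝ :=
  finsuppOfList (List.ofFn fun i => φ (f i))

theorem PS_vecOf {G : Type*} {φ : G → ℝ} (hφ : ∀ g, 0 ≤ φ g) {N : ℕ} (f : Fin (N + 1) → G)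
    {s : ℝ} (hs : s ≠ 0) : PS (vecOf φ f) s = ∑ i, φ (f i) ^ s := by
  rw [vecOf, PS_finsuppOfList _ (by
    intro v hv
    rw [List.mem_ofFn] at hv
    obtain ⟨i, rfl⟩ := hv
    exact hφ _) hs]
  rw [List.map_ofFn, List.sum_ofFn]
  rfl

theorem ltNorm_vecOf {G : Type*} {φ : G → ℝ} (hφ : ∀ g, 0 ≤ φ g) {N : ℕ} (f : Fin (N + 1) → G)
    {s : ℝ} (hs : s ≠ 0) : ltNorm (vecOf φ f) s = (∑ i, φ (f i) ^ s) ^ (1 / s) := by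
  rw [ltNorm_eq_PS, PS_vecOf hφ f hs]

section MV

variable {G : Type*} [CommGroup G] (φ : G → ℝ) (t : ℝ) (α : G)

def fullSet : Set ℝ := {x : ℝ | ∃ (N : ℕ) (f : Fin (N + 1) → G),
    α = ∏ i, f i ∧ x = (∑ i, φ (f i) ^ t) ^ (1 / t)}

theorem metricVersion_eq : metricVersion φ t α = sInf (fullSet φ t α) := rfl

theorem fullSet_nonempty : (fullSet φ t α).Nonempty := by
  refine ⟨(∑ i : Fin 1, φ (![α] i) ^ t) ^ (1 / t), 0, ![α], ?_, rfl⟩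
  simp

theorem fullSet_nonneg (hφ : ∀ g, 0 ≤ φ g) : ∀ v ∈ fullSet φ t α, 0 ≤ v := by
  rintro v ⟨N, f, -, rfl⟩
  exact Real.rpow_nonneg (Finset.sum_nonneg fun i _ => Real.rpow_nonneg (hφ _) t) _

theorem bddBelow_fullSet (hφ : ∀ g, 0 ≤ φ g) : BddBelow (fullSet φ t α) :=
  ⟨0, fun v hv => fullSet_nonneg φ t α hφ v hv⟩

theorem metricVersion_le (hφ : ∀ g, 0 ≤ φ g) {v : ℝ} (hv : v ∈ fullSet φ t α) :
    metricVersion φ t α ≤ v :=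
  csInf_le (bddBelow_fullSet φ t α hφ) hv

theorem metricVersion_nonneg (hφ : ∀ g, 0 ≤ φ g) : 0 ≤ metricVersion φ t α :=
  le_csInf (fullSet_nonempty φ t α) (fun v hv => fullSet_nonneg φ t α hφ v hv)

/-- If some factorization with factors in `S` attains `metricVersion`, then `S` replaces `G`. -/
theorem replaces_of_attained (hφ : ∀ g, 0 ≤ φ g) {S : Set G}
    (h : ∃ (N : ℕ) (f : Fin (N + 1) → G), (∀ i, f i ∈ S) ∧ α = ∏ i, f i ∧
      metricVersion φ t α = (∑ i, φ (f i) ^ t) ^ (1 / t)) :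
    Replaces φ t α S := by
  obtain ⟨N, f, hfS, hprod, hval⟩ := h
  apply IsLeast.isGLB
  constructor
  · exact ⟨N, f, hfS, hprod, hval⟩
  · rintro v ⟨N', f', -, hprod', rfl⟩
    exact metricVersion_le φ t α hφ ⟨N', f', hprod', rfl⟩

end MV


theorem PS_continuous (x : ℕ →₀ ℝ) : Continuous (PS x) := by
  have h : PS x = fun s => ∑ n ∈ x.support, Real.exp (Real.log |x n| * s) := by
    funext s
    apply Finset.sum_congr rfl
    intro n hn
    rw [Real.rpow_def_of_pos (abs_pos.mpr (Finsupp.mem_support_iff.mp hn))]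
  rw [h]
  apply continuous_finset_sum
  intro n _
  exact (continuous_const.mul continuous_id).rexp

theorem PS_pos {x : ℕ →₀ ℝ} (hx : x.support.Nonempty) (s : ℝ) : 0 < PS x s :=
  Finset.sum_pos (fun n hn =>
    Real.rpow_pos_of_pos (abs_pos.mpr (Finsupp.mem_support_iff.mp hn)) s) hx

theorem ltNorm_continuousAt (x : ℕ →₀ ℝ) {t : ℝ} (ht : 0 < t) :
    ContinuousAt (ltNorm x) t := by
  rcases Finset.eq_empty_or_nonempty x.support with hsupp | hsupp
  · have hev : (fun _ : ℝ => (0:ℝ)) =ᶠ[nhds t] ltNorm x := by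
      filter_upwards [eventually_gt_nhds ht] with s hs
      rw [ltNorm, hsupp]
      simp only [Finset.sum_empty]
      rw [Real.zero_rpow (by positivity : 1 / s ≠ 0)]
    exact continuousAt_const.congr hev
  · have h1 : ContinuousAt (PS x) t := (PS_continuous x).continuousAt
    have h2 : ContinuousAt (fun s : ℝ => 1 / s) t := continuousAt_const.div continuousAt_id ht.ne'
    have h3 := h1.rpow h2 (Or.inl (ne_of_gt (PS_pos hsupp t)))
    exact h3


theorem open_nonempty_infinite {U : Set ℝ} (hU : IsOpen U) (hne : U.Nonempty) : U.Infinite := by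
  obtain ⟨u, hu⟩ := hne
  obtain ⟨ε, hε, hball⟩ := Metric.isOpen_iff.mp hU u hu
  rw [Real.ball_eq_Ioo] at hball
  exact (Set.Ioo_infinite (by linarith)).mono hball

theorem open_nonempty_uncountable {U : Set ℝ} (hU : IsOpen U) (hne : U.Nonempty) :
    ¬ U.Countable := by
  obtain ⟨u, hu⟩ := hne
  obtain ⟨ε, hε, hball⟩ := Metric.isOpen_iff.mp hU u hu
  rw [Real.ball_eq_Ioo] at hball
  intro hc
  have hcIoo := hc.mono hball
  rw [← Cardinal.le_aleph0_iff_set_countable] at hcIoo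
  rw [Cardinal.mk_Ioo_real (by linarith : u - ε < u + ε)] at hcIoo
  exact absurd hcIoo (not_le.mpr Cardinal.aleph0_lt_continuum)


theorem not_isGLB_empty (c : ℝ) : ¬ IsGLB (∅ : Set ℝ) c := by
  rintro ⟨-, hub⟩
  have h1 : c + 1 ∈ lowerBounds (∅ : Set ℝ) := fun v hv => absurd hv (Set.notMem_empty v)
  have := hub h1
  linarith


section Mult

variable {G : Type*} (φ : G → ℝ)

noncomputable def mult {N : ℕ} (f : Fin (N + 1) → G) : ℝ →₀ ℕ :=
  ∑ i, if φ (f i) = 0 then 0 else Finsupp.single (φ (f i)) 1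

noncomputable def weight (m : ℝ →₀ ℕ) (t : ℝ) : ℝ := ∑ v ∈ m.support, (m v : ℝ) * v ^ t

theorem weight_add (m₁ m₂ : ℝ →₀ ℕ) (t : ℝ) :
    weight (m₁ + m₂) t = weight m₁ t + weight m₂ t := by
  have : ∀ m : ℝ →₀ ℕ, weight m t = m.sum (fun v n => (n : ℝ) * v ^ t) := fun m => rfl
  rw [this, this, this]
  exact Finsupp.sum_add_index' (fun v => by simp) (fun v n₁ n₂ => by push_cast; ring)

theorem weight_single (v : ℝ) (t : ℝ) : weight (Finsupp.single v 1) t = v ^ t := by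
  rw [weight, Finsupp.support_single_ne_zero v one_ne_zero]
  simp

theorem weight_mult {N : ℕ} (f : Fin (N + 1) → G) {t : ℝ} (ht : t ≠ 0) :
    weight (mult φ f) t = ∑ i, φ (f i) ^ t := by
  rw [mult]
  induction (Finset.univ : Finset (Fin (N + 1))) using Finset.induction_on with
  | empty => simp [weight]
  | insert j u hni ih =>
    rw [Finset.sum_insert hni, Finset.sum_insert hni, weight_add, ih]
    congr 1
    by_cases h : φ (f j) = 0
    · rw [if_pos h, h, Real.zero_rpow ht]
      simp [weight]
    · rw [if_neg h, weight_single]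

theorem mult_support_mem {N : ℕ} {f : Fin (N + 1) → G} {v : ℝ}
    (hv : v ∈ (mult φ f).support) : ∃ i, v = φ (f i) := by
  rw [Finsupp.mem_support_iff, mult, Finsupp.finset_sum_apply] at hv
  obtain ⟨i, -, hne⟩ := Finset.exists_ne_zero_of_sum_ne_zero hv
  by_cases h : φ (f i) = 0
  · rw [if_pos h] at hne; simp at hne
  · rw [if_neg h, Finsupp.single_apply] at hne
    by_cases h' : φ (f i) = v
    · exact ⟨i, h'.symm⟩
    · rw [if_neg h'] at hne; simp at hne

theorem mult_support_mem' {N : ℕ} {f : Fin (N + 1) → G} {v : ℝ}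
    (hv : v ∈ (mult φ f).support) : ∃ i, v = φ (f i) := mult_support_mem φ hv

theorem weight_nonneg {m : ℝ →₀ ℕ} (hm : ∀ v ∈ m.support, 0 ≤ v) (t : ℝ) : 0 ≤ weight m t :=
  Finset.sum_nonneg fun v hv => mul_nonneg (Nat.cast_nonneg _) (Real.rpow_nonneg (hm v hv) t)

theorem weight_mono {m m' : ℝ →₀ ℕ} (hpos : ∀ v ∈ m'.support, 0 ≤ v) (hle : m ≤ m') (t : ℝ) :
    weight m t ≤ weight m' t := by
  have hsupp : m.support ⊆ m'.support := by
    intro v hv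
    rw [Finsupp.mem_support_iff] at hv ⊢
    have := Finsupp.le_def.mp hle v
    omega
  rw [weight, weight,
    Finset.sum_subset hsupp (f := fun v => (m v : ℝ) * v ^ t) (fun v _ hv => by
      show (m v : ℝ) * v ^ t = 0
      rw [Finsupp.notMem_support_iff.mp hv]; simp)]
  apply Finset.sum_le_sum
  intro v hv
  have h1 : (m v : ℝ) ≤ (m' v : ℝ) := Nat.cast_le.mpr (Finsupp.le_def.mp hle v)
  exact mul_le_mul_of_nonneg_right h1 (Real.rpow_nonneg (hpos v hv) t)

end Mult


section Comp

noncomputable def lend (a : ℝ) (F : Finset ℝ) (t : ℝ) : ℝ :=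
  if h : (F.filter (fun e => e < t)).Nonempty then max a ((F.filter (fun e => e < t)).max' h)
  else a

noncomputable def uend (b : EReal) (F : Finset ℝ) (t : ℝ) : EReal :=
  if h : (F.filter (fun e => t < e)).Nonempty then
    min b (((F.filter (fun e => t < e)).min' h : ℝ) : EReal)
  else b

def comp (p : ℝ × EReal) : Set ℝ := {s | p.1 < s ∧ (s : EReal) < p.2}

variable {a t : ℝ} {b : EReal} {F : Finset ℝ}

theorem comp_open (p : ℝ × EReal) : IsOpen (comp p) := by
  have : comp p = Ioi p.1 ∩ ((↑) : ℝ → EReal) ⁻¹' (Iio p.2) := by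
    ext s; simp [comp, Set.mem_Ioi, Set.mem_Iio]
  rw [this]
  exact isOpen_Ioi.inter (isOpen_Iio.preimage continuous_coe_real_ereal)

theorem comp_ordConnected (p : ℝ × EReal) : (comp p).OrdConnected := by
  constructor
  rintro s ⟨hs1, hs2⟩ u ⟨hu1, hu2⟩ z ⟨hz1, hz2⟩
  exact ⟨lt_of_lt_of_le hs1 hz1, lt_of_le_of_lt (EReal.coe_le_coe_iff.mpr hz2) hu2⟩

theorem lend_lt (hat : a < t) : lend a F t < t := by
  rw [lend]
  split
  · rename_i h
    exact max_lt hat (Finset.mem_filter.mp ((F.filter (fun e => e < t)).max'_mem h)).2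
  · exact hat

theorem le_lend : a ≤ lend a F t := by
  rw [lend]; split
  · exact le_max_left _ _
  · exact le_refl a

theorem lt_uend (htb : (t : EReal) < b) : (t : EReal) < uend b F t := by
  rw [uend]
  split
  · rename_i h
    refine lt_min htb ?_
    exact_mod_cast (Finset.mem_filter.mp ((F.filter (fun e => t < e)).min'_mem h)).2
  · exact htb

theorem uend_le : uend b F t ≤ b := by
  rw [uend]; split
  · exact min_le_left _ _
  · exact le_refl b

theorem mem_comp (hat : a < t) (htb : (t : EReal) < b) :
    t ∈ comp (lend a F t, uend b F t) := ⟨lend_lt hat, lt_uend htb⟩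

theorem comp_subset (hs : s ∈ comp (lend a F t, uend b F t)) : a < s ∧ (s : EReal) < b :=
  ⟨lt_of_le_of_lt le_lend hs.1, lt_of_lt_of_le hs.2 uend_le⟩

theorem not_mem_comp (htF : t ∉ F) {e : ℝ} (he : e ∈ F) :
    e ∉ comp (lend a F t, uend b F t) := by
  rintro ⟨h1, h2⟩
  rcases lt_trichotomy e t with hlt | heq | hgt
  · have hmem : e ∈ F.filter (fun e => e < t) := Finset.mem_filter.mpr ⟨he, hlt⟩
    have hne : (F.filter (fun e => e < t)).Nonempty := ⟨e, hmem⟩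
    have : e ≤ lend a F t := by
      rw [lend, dif_pos hne]
      exact le_trans (Finset.le_max' _ e hmem) (le_max_right _ _)
    exact absurd h1 (not_lt.mpr this)
  · exact htF (heq ▸ he)
  · have hmem : e ∈ F.filter (fun e => t < e) := Finset.mem_filter.mpr ⟨he, hgt⟩
    have hne : (F.filter (fun e => t < e)).Nonempty := ⟨e, hmem⟩
    have : uend b F t ≤ (e : EReal) := by
      rw [uend, dif_pos hne]
      refine le_trans (min_le_right _ _) ?_
      exact_mod_cast Finset.min'_le _ e hmem
    exact absurd h2 (not_lt.mpr this)

theorem lend_mem : lend a F t ∈ insert a (F : Set ℝ) := by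
  rw [lend]; split
  · rename_i h
    rcases max_choice a ((F.filter (fun e => e < t)).max' h) with heq | heq <;> rw [heq]
    · exact Set.mem_insert _ _
    · exact Set.mem_insert_of_mem _ (Finset.mem_filter.mp ((F.filter _).max'_mem h)).1
  · exact Set.mem_insert _ _

theorem uend_mem : uend b F t ∈ insert b ((fun r : ℝ => (r : EReal)) '' (F : Set ℝ)) := by
  rw [uend]; split
  · rename_i h
    rcases min_choice b (((F.filter (fun e => t < e)).min' h : ℝ) : EReal) with heq | heq <;>
      rw [heq]
    · exact Set.mem_insert _ _
    · exact Set.mem_insert_of_mem _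
        ⟨_, (Finset.mem_filter.mp ((F.filter _).min'_mem h)).1, rfl⟩
  · exact Set.mem_insert _ _

end Comp


section Main

variable {G : Type*} [CommGroup G] (φ : G → ℝ) (α : G) (a : ℝ) (b : EReal)

theorem I_open : IsOpen {s : ℝ | a < s ∧ (s : EReal) < b} := by
  have : {s : ℝ | a < s ∧ (s : EReal) < b}
      = Ioi a ∩ ((↑) : ℝ → EReal) ⁻¹' (Iio b) := by
    ext s; simp [Set.mem_Ioi, Set.mem_Iio, and_comm]
  rw [this]
  exact isOpen_Ioi.inter (isOpen_Iio.preimage continuous_coe_real_ereal)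

theorem I_subset_Ioi (ha : 0 ≤ a) : {s : ℝ | a < s ∧ (s : EReal) < b} ⊆ Ioi 0 :=
  fun s hs => lt_of_le_of_lt ha hs.1

/-- Implication (i) → (ii). -/
theorem one_imp_two (ha : 0 ≤ a)
    (h1 : ∃ 𝒳 : Set (ℕ →₀ ℝ), 𝒳.Finite ∧ ∀ t : ℝ, a < t → (t : EReal) < b →
      IsLeast ((fun x => ltNorm x t) '' 𝒳) (metricVersion φ t α)) :
    {t : ℝ | a < t ∧ (t : EReal) < b ∧
      ¬ IsStandardPt φ α {s : ℝ | a < s ∧ (s : EReal) < b} t}.Finite := by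
  obtain ⟨𝒳, hfin, hmin⟩ := h1
  set I := {s : ℝ | a < s ∧ (s : EReal) < b} with hI
  -- intersection point sets are finite
  set D : (ℕ →₀ ℝ) → (ℕ →₀ ℝ) → Set ℝ := fun x y =>
    {s | 0 < s ∧ ltNorm x s = ltNorm y s ∧ ∃ u : ℝ, 0 < u ∧ ltNorm x u ≠ ltNorm y u} with hD
  have hDfin : ∀ x y, (D x y).Finite := by
    intro x y
    by_contra hinf
    have hinf' : (D x y).Infinite := hinf
    obtain ⟨s0, -, -, u, hu, hne⟩ := hinf'.nonempty
    have : {s : ℝ | 0 < s ∧ ltNorm x s = ltNorm y s}.Infinite :=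
      hinf'.mono (fun s hs => ⟨hs.1, hs.2.1⟩)
    exact hne (ltNorm_eqOn_of_infinite this u hu)
  apply Set.Finite.subset (Set.Finite.biUnion hfin (fun x _ => Set.Finite.biUnion hfin
    (fun y _ => hDfin x y)))
  -- exceptional points are intersection points
  rintro t ⟨hta, htb, hnstd⟩
  have ht0 : (0:ℝ) < t := lt_of_le_of_lt ha hta
  by_contra hnot
  apply hnstd
  have hkey : ∀ x ∈ 𝒳, ∀ y ∈ 𝒳, ltNorm x t = ltNorm y t →
      ∀ u : ℝ, 0 < u → ltNorm x u = ltNorm y u := by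
    intro x hx y hy hxy u hu
    by_contra hne
    exact hnot (Set.mem_biUnion hx (Set.mem_biUnion hy ⟨ht0, hxy, u, hu, hne⟩))
  -- construct a uniform neighborhood of t
  obtain ⟨hleast, hlb⟩ := hmin t hta htb
  obtain ⟨x0, hx0mem, hx0beta⟩ := hleast
  have hx0 : ltNorm x0 t = metricVersion φ t α := hx0beta
  set A : Set (ℕ →₀ ℝ) := {x ∈ 𝒳 | ltNorm x t = metricVersion φ t α} with hA
  have hstrict : ∀ x ∈ 𝒳 \ A, ltNorm x0 t < ltNorm x t := by
    rintro x ⟨hx, hxA⟩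
    have hle : metricVersion φ t α ≤ ltNorm x t := hlb ⟨x, hx, rfl⟩
    have hne : ltNorm x t ≠ metricVersion φ t α := fun h => hxA ⟨hx, h⟩
    rw [hx0]
    exact lt_of_le_of_ne hle (Ne.symm hne)
  set U : (ℕ →₀ ℝ) → Set ℝ := fun x => {s | 0 < s ∧ ltNorm x0 s < ltNorm x s} with hU
  have hUopen : ∀ x, IsOpen (U x) := by
    intro x
    have hco : ContinuousOn (fun s => ltNorm x s - ltNorm x0 s) (Ioi 0) := fun s hs =>
      (((ltNorm_continuousAt x hs).sub (ltNorm_continuousAt x0 hs))).continuousWithinAt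
    have := hco.isOpen_inter_preimage (t := Ioi (0:ℝ)) isOpen_Ioi isOpen_Ioi
    have heq : U x = Ioi 0 ∩ (fun s => ltNorm x s - ltNorm x0 s) ⁻¹' (Ioi 0) := by
      ext s
      simp only [hU, Set.mem_setOf_eq, Set.mem_inter_iff, Set.mem_Ioi, Set.mem_preimage,
        sub_pos]
    rw [heq]
    exact this
  set W : Set ℝ := I ∩ ⋂ x ∈ 𝒳 \ A, U x with hW
  have hWopen : IsOpen W :=
    (I_open a b).inter (Set.Finite.isOpen_biInter (hfin.subset Set.diff_subset)
      (fun x _ => hUopen x))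
  have htW : t ∈ W := by
    refine ⟨⟨hta, htb⟩, ?_⟩
    simp only [Set.mem_iInter]
    intro x hx
    exact ⟨ht0, hstrict x hx⟩
  obtain ⟨ε, hε, hball⟩ := Metric.isOpen_iff.mp hWopen t htW
  refine ⟨Ioo (t - ε) (t + ε), ?_, isOpen_Ioo, Set.ordConnected_Ioo, ?_, x0, ?_⟩
  · intro s hs
    rw [← Real.ball_eq_Ioo] at hs
    exact (hball hs).1
  · constructor <;> linarith
  · intro s hs
    rw [← Real.ball_eq_Ioo] at hs
    obtain ⟨hsI, hsU⟩ := hball hs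
    have hs0 : (0:ℝ) < s := lt_of_le_of_lt ha hsI.1
    obtain ⟨hleasts, hlbs⟩ := hmin s hsI.1 hsI.2
    obtain ⟨xs, hxsmem, hxsbeta⟩ := hleasts
    have hxs : ltNorm xs s = metricVersion φ s α := hxsbeta
    by_cases hxsA : xs ∈ A
    · have heqt : ltNorm xs t = ltNorm x0 t := by rw [hxsA.2, hx0]
      have := hkey xs hxsmem x0 hx0mem heqt s hs0
      rw [← hxs, this]
    · exfalso
      simp only [Set.mem_iInter] at hsU
      have := (hsU xs ⟨hxsmem, hxsA⟩).2
      have hle : metricVersion φ s α ≤ ltNorm x0 s := hlbs ⟨x0, hx0mem, rfl⟩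
      rw [hxs] at this
      linarith

end Main


section Main2

variable {G : Type*} [CommGroup G] [Countable G] (φ : G → ℝ) (α : G) {a : ℝ} {b : EReal}

/-- On a connected open set all of whose points have uniform neighborhoods inside it,
`metricVersion` is globally given by a single `ltNorm`. -/
theorem uniform_on_interval {C : Set ℝ} (hCconn : C.OrdConnected) (hCsub : C ⊆ Ioi 0)
    {t0 : ℝ} (ht0 : t0 ∈ C)
    (hstd : ∀ t ∈ C, ∃ J : Set ℝ, J ⊆ C ∧ IsOpen J ∧ t ∈ J ∧
      ∃ x : ℕ →₀ ℝ, ∀ s ∈ J, metricVersion φ s α = ltNorm x s) :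
    ∃ x : ℕ →₀ ℝ, ∀ t ∈ C, metricVersion φ t α = ltNorm x t := by
  have hdata : ∀ t : C, ∃ J : Set ℝ, J ⊆ C ∧ IsOpen J ∧ (t : ℝ) ∈ J ∧
      ∃ x : ℕ →₀ ℝ, ∀ s ∈ J, metricVersion φ s α = ltNorm x s := fun t => hstd t t.2
  choose J hJsub hJopen hJmem x hJx using hdata
  set x0 := x ⟨t0, ht0⟩ with hx0
  set U : Set ℝ := ⋃ (t : C) (_ : ∀ s : ℝ, 0 < s → ltNorm (x t) s = ltNorm x0 s), J t with hU
  set V : Set ℝ := ⋃ (t : C) (_ : ¬ ∀ s : ℝ, 0 < s → ltNorm (x t) s = ltNorm x0 s), J t with hV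
  have hUopen : IsOpen U := isOpen_iUnion fun t => isOpen_iUnion fun _ => hJopen t
  have hVopen : IsOpen V := isOpen_iUnion fun t => isOpen_iUnion fun _ => hJopen t
  have hcover : C ⊆ U ∪ V := by
    intro t ht
    by_cases h : ∀ s : ℝ, 0 < s → ltNorm (x ⟨t, ht⟩) s = ltNorm x0 s
    · exact Or.inl (Set.mem_iUnion₂.mpr ⟨⟨t, ht⟩, h, hJmem _⟩)
    · exact Or.inr (Set.mem_iUnion₂.mpr ⟨⟨t, ht⟩, h, hJmem _⟩)
  have hdisj : Disjoint U V := by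
    rw [Set.disjoint_left]
    intro s hsU hsV
    obtain ⟨t1, h1, hs1⟩ := Set.mem_iUnion₂.mp hsU
    obtain ⟨t2, h2, hs2⟩ := Set.mem_iUnion₂.mp hsV
    have hinter : (J t1 ∩ J t2).Infinite :=
      open_nonempty_infinite ((hJopen t1).inter (hJopen t2)) ⟨s, hs1, hs2⟩
    have hagree : {u : ℝ | 0 < u ∧ ltNorm (x t2) u = ltNorm (x t1) u}.Infinite := by
      apply hinter.mono
      intro u ⟨hu1, hu2⟩
      have h0u : (0:ℝ) < u := hCsub (hJsub t1 hu1)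
      exact ⟨h0u, by rw [← hJx t1 u hu1, ← hJx t2 u hu2]⟩
    apply h2
    intro u hu
    rw [ltNorm_eqOn_of_infinite hagree u hu]
    exact h1 u hu
  have hCU : C ⊆ U := by
    apply (hCconn.isPreconnected).subset_left_of_subset_union hUopen hVopen hdisj hcover
    exact ⟨t0, ht0, Set.mem_iUnion₂.mpr ⟨⟨t0, ht0⟩, fun s _ => rfl, hJmem _⟩⟩
  refine ⟨x0, fun t ht => ?_⟩
  obtain ⟨t1, h1, hmem⟩ := Set.mem_iUnion₂.mp (hCU ht)
  rw [hJx t1 t hmem, h1 t (hCsub ht)]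

/-- From pointwise attainment on an uncountable set where `metricVersion = ltNorm x`,
get a single factorization matching on the whole set (by countability of `G`). -/
theorem exists_factorization_eqOn (hφ : ∀ g, 0 ≤ φ g) {C : Set ℝ} (hCunc : ¬ C.Countable)
    (hCsub : C ⊆ Ioi 0) {x : ℕ →₀ ℝ} (hx : ∀ t ∈ C, metricVersion φ t α = ltNorm x t)
    (hatt : ∀ t ∈ C, InfAttained φ t α) :
    ∃ (N : ℕ) (f : Fin (N + 1) → G), α = ∏ i, f i ∧
      ∀ t : ℝ, 0 < t → ltNorm x t = (∑ i, φ (f i) ^ t) ^ (1 / t) := by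
  have hdata : ∀ t : C, ∃ y : Σ N : ℕ, Fin (N + 1) → G, α = ∏ i, y.2 i ∧
      metricVersion φ (t : ℝ) α = (∑ i, φ (y.2 i) ^ (t:ℝ)) ^ (1 / (t:ℝ)) := by
    rintro ⟨t, ht⟩
    obtain ⟨N, f, hprod, hval⟩ := hatt t ht
    exact ⟨⟨N, f⟩, hprod, hval⟩
  choose y hyprod hyval using hdata
  have hfiber : ∃ y0 : Σ N : ℕ, Fin (N + 1) → G, {t : ℝ | ∃ h : t ∈ C, y ⟨t, h⟩ = y0}.Infinite := by
    by_contra hnone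
    push_neg at hnone
    apply hCunc
    have hsub : C ⊆ ⋃ y0 : Σ N : ℕ, Fin (N + 1) → G, {t : ℝ | ∃ h : t ∈ C, y ⟨t, h⟩ = y0} :=
      fun t ht => Set.mem_iUnion.mpr ⟨y ⟨t, ht⟩, ht, rfl⟩
    exact (Set.countable_iUnion fun y0 => (hnone y0).countable).mono hsub
  obtain ⟨⟨N, f⟩, hfib⟩ := hfiber
  have hagree : {t : ℝ | 0 < t ∧ ltNorm x t = ltNorm (vecOf φ f) t}.Infinite := by
    apply hfib.mono
    rintro t ⟨ht, hyt⟩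
    have h0t : (0:ℝ) < t := hCsub ht
    refine ⟨h0t, ?_⟩
    rw [ltNorm_vecOf hφ f (ne_of_gt h0t), ← hx t ht]
    have := hyval ⟨t, ht⟩
    rw [hyt] at this
    exact this
  have hprod : α = ∏ i, f i := by
    obtain ⟨t, ht, hyt⟩ := hfib.nonempty
    have := hyprod ⟨t, ht⟩
    rw [hyt] at this
    exact this
  refine ⟨N, f, hprod, fun t ht => ?_⟩
  rw [ltNorm_eqOn_of_infinite hagree t ht, ltNorm_vecOf hφ f (ne_of_gt ht)]


theorem two_imp_three (hφ0 : ∀ g : G, 0 ≤ φ g) (ha : 0 ≤ a)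
    (hatt : ∀ t : ℝ, a < t → (t : EReal) < b → InfAttained φ t α)
    (h2 : {t : ℝ | a < t ∧ (t : EReal) < b ∧
      ¬ IsStandardPt φ α {s : ℝ | a < s ∧ (s : EReal) < b} t}.Finite) :
    ∃ R : Set G, R.Finite ∧ (1 : G) ∈ R ∧
      ∀ t : ℝ, a < t → (t : EReal) < b → Replaces φ t α R := by
  classical
  set I := {s : ℝ | a < s ∧ (s : EReal) < b} with hI
  set F : Finset ℝ := h2.toFinset with hF
  -- data for each component
  set P : Set (ℝ × EReal) :=
    (fun t => (lend a F t, uend b F t)) '' {t | (a < t ∧ (t : EReal) < b) ∧ t ∉ F} with hP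
  have hPfin : P.Finite := by
    apply Set.Finite.subset (Set.Finite.prod
      ((F.finite_toSet.insert a))
      (((F.finite_toSet.image (fun r : ℝ => (r : EReal))).insert b)))
    rintro p ⟨t, -, rfl⟩
    exact ⟨lend_mem, uend_mem⟩
  have hPdata : ∀ p : P, ∃ Nf : Σ N : ℕ, Fin (N + 1) → G, α = ∏ i, Nf.2 i ∧
      ∀ t ∈ comp (p : ℝ × EReal), metricVersion φ t α = (∑ i, φ (Nf.2 i) ^ t) ^ (1 / t) := by
    rintro ⟨p, hp⟩
    obtain ⟨t1, ⟨⟨hta, htb⟩, htF⟩, rfl⟩ := hp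
    have hCsubI : comp (lend a F t1, uend b F t1) ⊆ I := fun s hs => comp_subset hs
    have hCsub0 : comp (lend a F t1, uend b F t1) ⊆ Ioi 0 :=
      fun s hs => lt_of_le_of_lt ha (comp_subset hs).1
    have ht1mem : t1 ∈ comp (lend a F t1, uend b F t1) := mem_comp hta htb
    -- every point of the component is standard
    have hstd : ∀ s ∈ comp (lend a F t1, uend b F t1),
        ∃ J : Set ℝ, J ⊆ comp (lend a F t1, uend b F t1) ∧ IsOpen J ∧ s ∈ J ∧
          ∃ x : ℕ →₀ ℝ, ∀ u ∈ J, metricVersion φ u α = ltNorm x u := by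
      intro s hs
      have hsI : s ∈ I := hCsubI hs
      have hsF : s ∉ F := fun hsF' => not_mem_comp htF hsF' hs
      have hsstd : IsStandardPt φ α I s := by
        by_contra hnstd
        exact hsF (by
          rw [hF, Set.Finite.mem_toFinset]
          exact ⟨hsI.1, hsI.2, hnstd⟩)
      obtain ⟨J, hJI, hJopen, hJconn, hsJ, x, hxJ⟩ := hsstd
      exact ⟨J ∩ comp (lend a F t1, uend b F t1),
        Set.inter_subset_right, hJopen.inter (comp_open _), ⟨hsJ, hs⟩,
        x, fun u hu => hxJ u hu.1⟩
    obtain ⟨x, hx⟩ := uniform_on_interval φ α (comp_ordConnected _) hCsub0 ht1mem hstd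
    have hCunc : ¬ (comp (lend a F t1, uend b F t1)).Countable :=
      open_nonempty_uncountable (comp_open _) ⟨t1, ht1mem⟩
    obtain ⟨N, f, hprod, heq⟩ := exists_factorization_eqOn φ α hφ0 hCunc hCsub0 hx
      (fun t ht => hatt t (hCsubI ht).1 (hCsubI ht).2)
    refine ⟨⟨N, f⟩, hprod, fun t ht => ?_⟩
    rw [hx t ht, heq t (hCsub0 ht)]
  choose Y hYprod hYval using hPdata
  have hFdata : ∀ e : F, ∃ Nf : Σ N : ℕ, Fin (N + 1) → G, α = ∏ i, Nf.2 i ∧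
      metricVersion φ (e : ℝ) α = (∑ i, φ (Nf.2 i) ^ (e : ℝ)) ^ (1 / (e : ℝ)) := by
    rintro ⟨e, he⟩
    rw [hF, Set.Finite.mem_toFinset] at he
    obtain ⟨N, f, hprod, hval⟩ := hatt e he.1 he.2.1
    exact ⟨⟨N, f⟩, hprod, hval⟩
  choose Z hZprod hZval using hFdata
  haveI : Finite ↥P := hPfin.to_subtype
  refine ⟨insert (1 : G) ((⋃ p : P, Set.range (Y p).2) ∪ ⋃ e : F, Set.range (Z e).2),
    ?_, Set.mem_insert _ _, ?_⟩
  · apply Set.Finite.insert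
    exact (Set.finite_iUnion fun p => Set.finite_range _).union
      (Set.finite_iUnion fun e => Set.finite_range _)
  · intro t hta htb
    by_cases htF : t ∈ F
    · apply replaces_of_attained φ t α hφ0
      refine ⟨(Z ⟨t, htF⟩).1, (Z ⟨t, htF⟩).2, ?_, hZprod ⟨t, htF⟩, hZval ⟨t, htF⟩⟩
      intro i
      exact Set.mem_insert_of_mem _ (Or.inr (Set.mem_iUnion.mpr ⟨⟨t, htF⟩, Set.mem_range_self i⟩))
    · have hp : (lend a F t, uend b F t) ∈ P := ⟨t, ⟨⟨hta, htb⟩, htF⟩, rfl⟩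
      apply replaces_of_attained φ t α hφ0
      refine ⟨(Y ⟨_, hp⟩).1, (Y ⟨_, hp⟩).2, ?_, hYprod ⟨_, hp⟩, ?_⟩
      · intro i
        exact Set.mem_insert_of_mem _
          (Or.inl (Set.mem_iUnion.mpr ⟨⟨_, hp⟩, Set.mem_range_self i⟩))
      · exact hYval ⟨_, hp⟩ t (mem_comp hta htb)

/-- Implication (iv) → (i). -/
theorem four_imp_one (hφ0 : ∀ g : G, 0 ≤ φ g) (ha : 0 ≤ a)
    (h4 : ∃ S : Set G, (1 : G) ∈ S ∧ (φ '' S).Finite ∧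
      ∀ t : ℝ, a < t → (t : EReal) < b → Replaces φ t α S) :
    ∃ 𝒳 : Set (ℕ →₀ ℝ), 𝒳.Finite ∧ ∀ t : ℝ, a < t → (t : EReal) < b →
      IsLeast ((fun x => ltNorm x t) '' 𝒳) (metricVersion φ t α) := by
  classical
  obtain ⟨S, h1S, hVfin, hrep⟩ := h4
  set A : Set (ℝ →₀ ℕ) := {m | ∃ (N : ℕ) (f : Fin (N + 1) → G),
    (∀ i, f i ∈ S) ∧ α = ∏ i, f i ∧ m = mult φ f} with hA
  -- supports of elements of A are nonnegative and lie in the finite set of values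
  have hAsupp : ∀ m ∈ A, ∀ v ∈ m.support, v ∈ hVfin.toFinset ∧ 0 ≤ v := by
    rintro m ⟨N, f, hfS, -, rfl⟩ v hv
    obtain ⟨i, rfl⟩ := mult_support_mem φ hv
    exact ⟨by rw [Set.Finite.mem_toFinset]; exact ⟨f i, hfS i, rfl⟩, hφ0 _⟩
  -- A is partially well ordered (Dickson)
  have hPWO : A.IsPWO := by
    set e : ({v // v ∈ hVfin.toFinset} →₀ ℕ) → (ℝ →₀ ℕ) :=
      Finsupp.embDomain (Function.Embedding.subtype _) with he
    have hmono : Monotone e := by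
      intro m₁ m₂ hle
      rw [Finsupp.le_def]
      intro v
      by_cases hv : v ∈ hVfin.toFinset
      · have h1 : e m₁ v = m₁ ⟨v, hv⟩ :=
          Finsupp.embDomain_apply_self (Function.Embedding.subtype _) m₁ ⟨v, hv⟩
        have h2 : e m₂ v = m₂ ⟨v, hv⟩ :=
          Finsupp.embDomain_apply_self (Function.Embedding.subtype _) m₂ ⟨v, hv⟩
        rw [h1, h2]
        exact Finsupp.le_def.mp hle _
      · have hnr : v ∉ Set.range ((Function.Embedding.subtype (· ∈ hVfin.toFinset))) := by
          rintro ⟨w, rfl⟩; exact hv w.2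
        rw [Finsupp.embDomain_notin_range _ _ _ hnr, Finsupp.embDomain_notin_range _ _ _ hnr]
    have himage : A ⊆ e '' Set.univ := by
      intro m hm
      refine ⟨Finsupp.subtypeDomain (· ∈ hVfin.toFinset) m, Set.mem_univ _, ?_⟩
      ext v
      by_cases hv : v ∈ hVfin.toFinset
      · have h1 : e (Finsupp.subtypeDomain (· ∈ hVfin.toFinset) m) v
            = Finsupp.subtypeDomain (· ∈ hVfin.toFinset) m ⟨v, hv⟩ :=
          Finsupp.embDomain_apply_self (Function.Embedding.subtype _) _ ⟨v, hv⟩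
        rw [h1, Finsupp.subtypeDomain_apply]
      · have hnr : v ∉ Set.range ((Function.Embedding.subtype (· ∈ hVfin.toFinset))) := by
          rintro ⟨w, rfl⟩; exact hv w.2
        rw [Finsupp.embDomain_notin_range _ _ _ hnr]
        by_contra h
        have hvs : v ∈ m.support := Finsupp.mem_support_iff.mpr (fun h' => h h'.symm)
        exact hv (hAsupp m hm v hvs).1
    exact ((Set.isPWO_of_wellQuasiOrderedLE Set.univ).image_of_monotone hmono).mono himage
  -- minimal elements
  set B : Set (ℝ →₀ ℕ) := {m ∈ A | ∀ m' ∈ A, m' ≤ m → m' = m} with hB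
  have hBfin : B.Finite := by
    have hanti : IsAntichain (· ≤ ·) B := by
      rintro m₁ ⟨hm₁A, -⟩ m₂ ⟨-, hm₂min⟩ hne hle
      exact hne (hm₂min m₁ hm₁A hle)
    exact hanti.finite_of_partiallyWellOrderedOn (hPWO.mono (fun m hm => hm.1))
  have hbasis : ∀ m ∈ A, ∃ mb ∈ B, mb ≤ m := by
    intro m hm
    set A' : Set (ℝ →₀ ℕ) := {m' ∈ A | m' ≤ m} with hA'
    have hA'wf : A'.IsWF := (hPWO.isWF).mono (fun m' hm' => hm'.1)
    have hA'ne : A'.Nonempty := ⟨m, hm, le_refl m⟩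
    refine ⟨hA'wf.min hA'ne, ⟨(hA'wf.min_mem hA'ne).1, ?_⟩, (hA'wf.min_mem hA'ne).2⟩
    intro m' hm'A hm'le
    have hm'A' : m' ∈ A' := ⟨hm'A, le_trans hm'le (hA'wf.min_mem hA'ne).2⟩
    have hnlt := hA'wf.not_lt_min hA'ne hm'A'
    exact of_not_not fun hne => hnlt (lt_iff_le_and_ne.mpr ⟨hm'le, hne⟩)
  -- choose witness factorizations for minimal elements
  have hWdata : ∀ m : B, ∃ Nf : Σ N : ℕ, Fin (N + 1) → G,
      (∀ i, Nf.2 i ∈ S) ∧ α = ∏ i, Nf.2 i ∧ (m : ℝ →₀ ℕ) = mult φ Nf.2 := by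
    rintro ⟨m, ⟨⟨N, f, hfS, hprod, heq⟩, -⟩⟩
    exact ⟨⟨N, f⟩, hfS, hprod, heq⟩
  choose W hWS hWprod hWmult using hWdata
  haveI : Finite ↥B := hBfin.to_subtype
  refine ⟨Set.range (fun m : B => vecOf φ (W m).2), Set.finite_range _, ?_⟩
  intro t hta htb
  have ht0 : (0 : ℝ) < t := lt_of_le_of_lt ha hta
  set Sset : Set ℝ := {x : ℝ | ∃ (N : ℕ) (f : Fin (N + 1) → G),
      (∀ i, f i ∈ S) ∧ α = ∏ i, f i ∧ x = (∑ i, φ (f i) ^ t) ^ (1 / t)} with hSset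
  have hglb : IsGLB Sset (metricVersion φ t α) := hrep t hta htb
  -- values of minimal elements
  have hval : ∀ m : B, ltNorm (vecOf φ (W m).2) t = weight (m : ℝ →₀ ℕ) t ^ (1 / t) := by
    intro m
    rw [ltNorm_vecOf hφ0 _ (ne_of_gt ht0), hWmult m, weight_mult φ _ (ne_of_gt ht0)]
  have hmem : ∀ m : B, weight (m : ℝ →₀ ℕ) t ^ (1 / t) ∈ Sset := by
    intro m
    exact ⟨(W m).1, (W m).2, hWS m, hWprod m, by
      rw [hWmult m, weight_mult φ _ (ne_of_gt ht0)]⟩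
  have hlower : ∀ v ∈ Sset, ∃ m : B, weight (m : ℝ →₀ ℕ) t ^ (1 / t) ≤ v := by
    rintro v ⟨N, f, hfS, hprod, rfl⟩
    have hmA : mult φ f ∈ A := ⟨N, f, hfS, hprod, rfl⟩
    obtain ⟨mb, hmbB, hmble⟩ := hbasis _ hmA
    refine ⟨⟨mb, hmbB⟩, ?_⟩
    rw [← weight_mult φ f (ne_of_gt ht0)]
    apply Real.rpow_le_rpow (weight_nonneg (fun v hv => (hAsupp mb hmbB.1 v hv).2) t)
      (weight_mono (fun v hv => (hAsupp _ hmA v hv).2) hmble t)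
    positivity
  -- B is nonempty
  have hBne : B.Nonempty := by
    rcases Set.eq_empty_or_nonempty Sset with hemp | ⟨v, hv⟩
    · rw [hemp] at hglb
      exact absurd hglb (not_isGLB_empty _)
    · obtain ⟨m, hm⟩ := hlower v hv
      exact ⟨m, m.2⟩
  -- take the minimum over B
  obtain ⟨mstar, hmstarB, hmstarmin⟩ := Set.exists_min_image B
    (fun m => weight m t ^ (1 / t)) hBfin hBne
  have hleast : IsLeast Sset (weight mstar t ^ (1 / t)) := by
    constructor
    · exact hmem ⟨mstar, hmstarB⟩
    · intro v hv
      obtain ⟨m, hmle⟩ := hlower v hv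
      exact le_trans (hmstarmin m m.2) hmle
  have hMt : metricVersion φ t α = weight mstar t ^ (1 / t) :=
    hglb.unique hleast.isGLB
  constructor
  · refine ⟨vecOf φ (W ⟨mstar, hmstarB⟩).2, ⟨⟨mstar, hmstarB⟩, rfl⟩, ?_⟩
    show ltNorm (vecOf φ (W ⟨mstar, hmstarB⟩).2) t = metricVersion φ t α
    rw [hval ⟨mstar, hmstarB⟩, hMt]
  · rintro v ⟨x, ⟨m, rfl⟩, rfl⟩
    show metricVersion φ t α ≤ ltNorm (vecOf φ (W m).2) t
    rw [hval m, hMt]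
    exact hmstarmin m m.2


end Main2

end URT

/-- Theorem (main result).  Let `G` be a countable abelian group, `φ` a height on `G`,
`α ∈ G`, and `I = (a,b) ⊆ (0,∞)` an open interval (with `b ≤ ∞` allowed) such that the
infimum in the definition of `φ_t(α)` is attained for every `t ∈ I`.  The following are
equivalent:
(i) there is a finite set `𝒳` of finitely supported real sequences with
    `φ_t(α) = min{‖x‖_t : x ∈ 𝒳}` for all `t ∈ I`;
(ii) `I` contains only finitely many exceptional points;
(iii) there is a finite set `R ⊆ G` containing the identity that replaces `G` at every `t ∈ I`;
(iv) there is a set `S ⊆ G` containing the identity, with `φ(S)` finite, that replaces `G`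
     at every `t ∈ I`. -/
theorem uniformReplacements_tfae {G : Type*} [CommGroup G] [Countable G]
    (φ : G → ℝ) (hφ : IsHeight φ) (α : G) (a : ℝ) (b : EReal) (ha : 0 ≤ a)
    (hab : (a : EReal) < b)
    (hatt : ∀ t : ℝ, a < t → (t : EReal) < b → InfAttained φ t α) :
    List.TFAE [
      ∃ 𝒳 : Set (ℕ →₀ ℝ), 𝒳.Finite ∧ ∀ t : ℝ, a < t → (t : EReal) < b →
        IsLeast ((fun x => ltNorm x t) '' 𝒳) (metricVersion φ t α),
      {t : ℝ | a < t ∧ (t : EReal) < b ∧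
        ¬ IsStandardPt φ α {s : ℝ | a < s ∧ (s : EReal) < b} t}.Finite,
      ∃ R : Set G, R.Finite ∧ (1 : G) ∈ R ∧
        ∀ t : ℝ, a < t → (t : EReal) < b → Replaces φ t α R,
      ∃ S : Set G, (1 : G) ∈ S ∧ (φ '' S).Finite ∧
        ∀ t : ℝ, a < t → (t : EReal) < b → Replaces φ t α S] := by
  tfae_have 1 → 2
  · exact URT.one_imp_two φ α a b ha
  tfae_have 2 → 3
  · exact URT.two_imp_three φ α hφ.1 ha hatt
  tfae_have 3 → 4
  · rintro ⟨R, hRfin, hR1, hRrep⟩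
    exact ⟨R, hR1, hRfin.image φ, hRrep⟩
  tfae_have 4 → 1
  · exact URT.four_imp_one φ α hφ.1 ha
  tfae_finish
end

section
/- Let G be a multiplicatively written abelian group, let φ : G → [0,∞) be a height on G, fix α ∈ G, and let a ≥ 0. Suppose there exists a set S ⊆ G containing the identity, with φ(S) finite, that replaces G at every t ∈ (a,∞). Then there exist s ≥ a, N ∈ ℕ, and α_1, …, α_N ∈ S with α = ∏_{n=1}^N α_n such that φ_t(α) = (∑_{n=1}^N φ(α_n)^t)^(1/t) for all t ∈ (s,∞); in particular, there is a single finitely supported real sequence M with φ_t(α) = ‖M‖_t for all sufficiently large t, and there exists a finite set 𝒳 of finitely supported real sequences such that φ_t(α) = min{‖x‖_t : x ∈ 𝒳} for all t ∈ (a,∞). -/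
open scoped BigOperators

section AuxEv
open Finset Filter Real Topology


/-- sum of a multiplicity vector's `c ↦ n·c^t`. -/
noncomputable def sigE (m : ℝ →₀ ℕ) (t : ℝ) : ℝ := m.sum fun c n => (n : ℝ) * c ^ t

lemma sigE_nonneg {m : ℝ →₀ ℕ} {t : ℝ} (h : ∀ c ∈ m.support, (0:ℝ) ≤ c) :
    0 ≤ sigE m t :=
  Finset.sum_nonneg fun c hc => mul_nonneg (Nat.cast_nonneg _) (Real.rpow_nonneg (h c hc) t)

lemma support_subset_of_le {m m' : ℝ →₀ ℕ} (h : m ≤ m') : m.support ⊆ m'.support := by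
  intro c hc
  simp only [Finsupp.mem_support_iff] at *
  exact fun h0 => hc (Nat.le_zero.mp (h0 ▸ Finsupp.le_def.mp h c))

lemma sigE_mono {m m' : ℝ →₀ ℕ} {t : ℝ} (hpos : ∀ c ∈ m'.support, (0:ℝ) ≤ c)
    (h : m ≤ m') : sigE m t ≤ sigE m' t := by
  have hsub := support_subset_of_le h
  have e1 : sigE m t = ∑ c ∈ m'.support, (m c : ℝ) * c ^ t :=
    Finset.sum_subset hsub (fun c _ hc => by
      rw [Finsupp.notMem_support_iff.mp hc]; simp)
  rw [e1]
  exact Finset.sum_le_sum fun c hc => by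
    have := Finsupp.le_def.mp h c
    have h2 : (0:ℝ) ≤ c ^ t := Real.rpow_nonneg (hpos c hc) t
    exact mul_le_mul_of_nonneg_right (by exact_mod_cast this) h2

open scoped Classical in
/-- The multiplicity vector of the nonzero `φ`-values of a factorization. -/
noncomputable def mOf {G : Type*} [CommGroup G] (φ : G → ℝ) {N : ℕ} (f : Fin (N + 1) → G) :
    ℝ →₀ ℕ :=
  ∑ i, if φ (f i) = 0 then 0 else Finsupp.single (φ (f i)) 1

lemma sigE_mOf {G : Type*} [CommGroup G] (φ : G → ℝ) {N : ℕ} (f : Fin (N + 1) → G)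
    {t : ℝ} (ht : t ≠ 0) : sigE (mOf φ f) t = ∑ i, φ (f i) ^ t := by
  classical
  unfold sigE mOf
  rw [← Finsupp.sum_finset_sum_index (by intro c; simp) (by intro a b₁ b₂; push_cast; ring)]
  refine Finset.sum_congr rfl fun i _ => ?_
  split_ifs with h
  · rw [Finsupp.sum_zero_index, h, Real.zero_rpow ht]
  · rw [Finsupp.sum_single_index (by simp)]
    simp

lemma mOf_support {G : Type*} [CommGroup G] (φ : G → ℝ) {N : ℕ} (f : Fin (N + 1) → G)
    {c : ℝ} (hc : c ∈ (mOf φ f).support) : c ≠ 0 ∧ ∃ i, φ (f i) = c := by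
  classical
  rw [Finsupp.mem_support_iff] at hc
  unfold mOf at hc
  rw [Finsupp.finset_sum_apply] at hc
  obtain ⟨i, -, hi⟩ := Finset.exists_ne_zero_of_sum_ne_zero hc
  by_cases h : φ (f i) = 0
  · simp [h] at hi
  · rw [if_neg h, Finsupp.single_apply] at hi
    split_ifs at hi with h2
    · exact ⟨h2 ▸ h, i, h2⟩
    · exact absurd rfl hi

/-- The sequence of `φ`-values of a factorization, as a `Finsupp` on `ℕ`. -/
noncomputable def xOf {G : Type*} [CommGroup G] (φ : G → ℝ) {N : ℕ} (f : Fin (N + 1) → G) :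
    ℕ →₀ ℝ :=
  Finsupp.onFinset (Finset.range (N + 1))
    (fun n => if h : n < N + 1 then φ (f ⟨n, h⟩) else 0)
    (fun n hn => by
      rw [Finset.mem_range]
      by_contra h
      exact hn (dif_neg h))

lemma ltNorm_xOf {G : Type*} [CommGroup G] (φ : G → ℝ) (hpos : ∀ β, 0 ≤ φ β)
    {N : ℕ} (f : Fin (N + 1) → G) {t : ℝ} (ht : t ≠ 0) :
    ltNorm (xOf φ f) t = (∑ i, φ (f i) ^ t) ^ (1 / t) := by
  unfold ltNorm
  congr 1
  have h1 : ∑ n ∈ (xOf φ f).support, |xOf φ f n| ^ t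
      = ∑ n ∈ Finset.range (N + 1), |xOf φ f n| ^ t := by
    refine Finset.sum_subset Finsupp.support_onFinset_subset (fun n _ hn => ?_)
    rw [Finsupp.notMem_support_iff.mp hn, abs_zero, Real.zero_rpow ht]
  rw [h1, ← Fin.sum_univ_eq_sum_range (fun n => |xOf φ f n| ^ t) (N + 1)]
  refine Finset.sum_congr rfl fun i _ => ?_
  have h2 : xOf φ f (i : ℕ) = φ (f i) := by
    show (if h : (i : ℕ) < N + 1 then φ (f ⟨(i : ℕ), h⟩) else 0) = φ (f i)
    rw [dif_pos i.isLt]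
  rw [h2, abs_of_nonneg (hpos _)]

lemma expsum_eventual_sign (E : Finset ℝ) (hE : ∀ c ∈ E, 0 < c) (w : ℝ → ℤ) :
    ∃ s : ℝ, (∀ t : ℝ, s < t → (0:ℝ) < ∑ c ∈ E, (w c : ℝ) * c ^ t) ∨
             (∀ t : ℝ, s < t → (∑ c ∈ E, (w c : ℝ) * c ^ t) < 0) ∨
             (∀ t : ℝ, s < t → (∑ c ∈ E, (w c : ℝ) * c ^ t) = 0) := by
  classical
  by_cases h0 : ∀ c ∈ E, w c = 0
  · exact ⟨0, Or.inr <| Or.inr fun t _ =>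
      Finset.sum_eq_zero fun c hc => by rw [h0 c hc]; simp⟩
  set E' := E.filter (fun c => w c ≠ 0) with hE'def
  have hE'ne : E'.Nonempty := by
    push_neg at h0
    obtain ⟨c, hc, hwc⟩ := h0
    exact ⟨c, Finset.mem_filter.mpr ⟨hc, hwc⟩⟩
  set c₀ := E'.max' hE'ne with hc₀def
  have hc₀E' : c₀ ∈ E' := E'.max'_mem hE'ne
  have hc₀pos : 0 < c₀ := hE _ (Finset.filter_subset _ _ hc₀E')
  have hw₀ : w c₀ ≠ 0 := (Finset.mem_filter.mp hc₀E').2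
  have hsum : ∀ t : ℝ, ∑ c ∈ E, (w c : ℝ) * c ^ t = ∑ c ∈ E', (w c : ℝ) * c ^ t := by
    intro t
    refine (Finset.sum_subset (Finset.filter_subset _ _) (fun c hc hc' => ?_)).symm
    have hw : w c = 0 := by
      by_contra hw
      exact hc' (Finset.mem_filter.mpr ⟨hc, hw⟩)
    rw [hw]; simp
  -- limit of the normalized sum
  have hlim : Tendsto (fun t : ℝ => ∑ c ∈ E', (w c : ℝ) * (c / c₀) ^ t) atTop
      (𝓝 (∑ c ∈ E', if c = c₀ then (w c : ℝ) else 0)) := by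
    refine tendsto_finset_sum _ fun c hc => ?_
    by_cases h : c = c₀
    · rw [if_pos h, h]
      have hcc : c₀ / c₀ = 1 := div_self (ne_of_gt hc₀pos)
      exact Filter.Tendsto.congr
        (fun t => by rw [hcc, Real.one_rpow, mul_one]) tendsto_const_nhds
    · rw [if_neg h]
      have hcpos : 0 < c := hE _ (Finset.filter_subset _ _ hc)
      have hlt : c < c₀ := lt_of_le_of_ne (E'.le_max' c hc) h
      have hb : Tendsto (fun t : ℝ => (c / c₀) ^ t) atTop (𝓝 0) :=
        tendsto_rpow_atTop_of_base_lt_one _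
          (by nlinarith [div_pos hcpos hc₀pos]) ((div_lt_one hc₀pos).mpr hlt)
      simpa using hb.const_mul (w c : ℝ)
  have hval : (∑ c ∈ E', if c = c₀ then (w c : ℝ) else 0) = (w c₀ : ℝ) := by
    rw [Finset.sum_ite_eq' E' c₀ (fun c => (w c : ℝ))]
    simp [hc₀E']
  rw [hval] at hlim
  have hquot : ∀ t : ℝ, ∑ c ∈ E', (w c : ℝ) * (c / c₀) ^ t
      = (∑ c ∈ E, (w c : ℝ) * c ^ t) / c₀ ^ t := by
    intro t
    rw [hsum t, Finset.sum_div]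
    refine Finset.sum_congr rfl fun c hc => ?_
    rw [Real.div_rpow (le_of_lt (hE _ (Finset.filter_subset _ _ hc))) (le_of_lt hc₀pos)]
    ring
  rcases lt_or_gt_of_ne (fun h : (w c₀ : ℝ) = 0 => hw₀ (by exact_mod_cast h)) with hneg | hpos
  · -- w c₀ < 0 : eventually negative
    have hev : ∀ᶠ t : ℝ in atTop, (∑ c ∈ E', (w c : ℝ) * (c / c₀) ^ t) < 0 :=
      hlim.eventually (eventually_lt_nhds hneg)
    obtain ⟨s, hs⟩ := eventually_atTop.mp hev
    refine ⟨s, Or.inr <| Or.inl fun t hts => ?_⟩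
    have := hs t (le_of_lt hts)
    rw [hquot t] at this
    have hc := Real.rpow_pos_of_pos hc₀pos t
    have := (div_lt_iff₀ hc).mp this
    linarith
  · have hev : ∀ᶠ t : ℝ in atTop, (0:ℝ) < ∑ c ∈ E', (w c : ℝ) * (c / c₀) ^ t :=
      hlim.eventually (eventually_gt_nhds hpos)
    obtain ⟨s, hs⟩ := eventually_atTop.mp hev
    refine ⟨s, Or.inl fun t hts => ?_⟩
    have := hs t (le_of_lt hts)
    rw [hquot t] at this
    have hc := Real.rpow_pos_of_pos hc₀pos t
    have := (lt_div_iff₀ hc).mp this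
    linarith

lemma isPWO_support_subset (C : Finset ℝ) :
    {m : ℝ →₀ ℕ | ↑m.support ⊆ (C : Set ℝ)}.IsPWO := by
  classical
  have h1 : (Set.univ : Set ({c // c ∈ C} →₀ ℕ)).IsPWO := Set.isPWO_of_wellQuasiOrderedLE _
  have hmono : Monotone (fun m : {c // c ∈ C} →₀ ℕ => m.extendDomain) := by
    intro m m' hle
    rw [Finsupp.le_def]
    intro c
    rw [Finsupp.extendDomain_apply, Finsupp.extendDomain_apply]
    split_ifs with h
    · exact Finsupp.le_def.mp hle _
    · exact le_rfl
  have h2 := h1.image_of_monotone hmono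
  refine h2.mono fun m hm => ?_
  exact ⟨Finsupp.subtypeDomain _ m, Set.mem_univ _,
    Finsupp.extendDomain_subtypeDomain m (fun c hc => hm hc)⟩

end AuxEv

/-- Let `φ` be a height on `G`, `α ∈ G`, `a ≥ 0`, and suppose there is a set `S ⊆ G`
containing the identity, with `φ(S)` finite, that replaces `G` at every `t ∈ (a,∞)`.
Then there are `s ≥ a` and a single factorization `α = ∏ₙ αₙ` with all `αₙ ∈ S` such that
`φ_t(α) = (∑ₙ φ(αₙ)^t)^(1/t)` for all `t ∈ (s,∞)`; in particular there is a single
finitely supported real sequence `M` with `φ_t(α) = ‖M‖_t` for all sufficiently large `t`,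
and there is a finite set `𝒳` of finitely supported real sequences with
`φ_t(α) = min{‖x‖_t : x ∈ 𝒳}` for all `t ∈ (a,∞)`. -/
theorem eventually_single_factorization {G : Type*} [CommGroup G]
    (φ : G → ℝ) (hφ : IsHeight φ) (α : G) (a : ℝ) (ha : 0 ≤ a)
    (S : Set G) (hS1 : (1 : G) ∈ S) (hSfin : (φ '' S).Finite)
    (hrep : ∀ t ∈ Set.Ioi a, Replaces φ t α S) :
    (∃ s : ℝ, a ≤ s ∧ ∃ (N : ℕ) (f : Fin (N + 1) → G), (∀ i, f i ∈ S) ∧ α = ∏ i, f i ∧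
      ∀ t ∈ Set.Ioi s, metricVersion φ t α = (∑ i, φ (f i) ^ t) ^ (1 / t)) ∧
    (∃ (M : ℕ →₀ ℝ) (s : ℝ), a ≤ s ∧
      ∀ t ∈ Set.Ioi s, metricVersion φ t α = ltNorm M t) ∧
    ∃ 𝒳 : Set (ℕ →₀ ℝ), 𝒳.Finite ∧
      ∀ t ∈ Set.Ioi a, IsLeast ((fun x => ltNorm x t) '' 𝒳) (metricVersion φ t α) := by
  classical
  obtain ⟨hφ0, hφ1, -⟩ := hφ
  set 𝒜 : Set (ℝ →₀ ℕ) := { m | ∃ (N : ℕ) (f : Fin (N + 1) → G),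
    (∀ i, f i ∈ S) ∧ α = ∏ i, f i ∧ m = mOf φ f } with h𝒜
  have hsupp : ∀ m ∈ 𝒜, ∀ c ∈ m.support, 0 < c ∧ c ∈ φ '' S := by
    rintro m ⟨N, f, hfS, hprod, rfl⟩ c hc
    obtain ⟨hc0, i, hi⟩ := mOf_support φ f hc
    exact ⟨lt_of_le_of_ne (hi ▸ hφ0 (f i)) (Ne.symm hc0), ⟨f i, hfS i, hi⟩⟩
  have hsupp_pos : ∀ m ∈ 𝒜, ∀ c ∈ m.support, (0:ℝ) ≤ c :=
    fun m hm c hc => (hsupp m hm c hc).1.le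
  have hglb : ∀ t : ℝ, a < t →
      IsGLB ((fun m => sigE m t ^ (1/t)) '' 𝒜) (metricVersion φ t α) := by
    intro t ht
    have htne : t ≠ 0 := ne_of_gt (lt_of_le_of_lt ha ht)
    have hset : {x : ℝ | ∃ (N : ℕ) (f : Fin (N + 1) → G),
        (∀ i, f i ∈ S) ∧ α = ∏ i, f i ∧ x = (∑ i, φ (f i) ^ t) ^ (1 / t)}
        = (fun m => sigE m t ^ (1/t)) '' 𝒜 := by
      ext x
      constructor
      · rintro ⟨N, f, h1, h2, rfl⟩
        refine ⟨mOf φ f, ⟨N, f, h1, h2, rfl⟩, ?_⟩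
        show sigE (mOf φ f) t ^ (1 / t) = _
        rw [sigE_mOf φ f htne]
      · rintro ⟨m, ⟨N, f, h1, h2, rfl⟩, rfl⟩
        refine ⟨N, f, h1, h2, ?_⟩
        show sigE (mOf φ f) t ^ (1 / t) = _
        rw [sigE_mOf φ f htne]
    have h := hrep t ht
    rwa [Replaces, hset] at h
  have h𝒜ne : 𝒜.Nonempty := by
    have h := hglb (a+1) (by linarith)
    by_contra hne
    rw [Set.not_nonempty_iff_eq_empty] at hne
    rw [hne, Set.image_empty] at h
    have h2 : metricVersion φ (a+1) α + 1 ≤ metricVersion φ (a+1) α :=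
      h.2 (fun y hy => absurd hy (Set.notMem_empty y))
    linarith
  have h𝒜P : 𝒜.IsPWO := (isPWO_support_subset hSfin.toFinset).mono
    (fun m hm c hc => by
      rw [Finset.mem_coe, Set.Finite.mem_toFinset]
      exact (hsupp m hm c (Finset.mem_coe.mp hc)).2)
  set D : Set (ℝ →₀ ℕ) := { d | d ∈ 𝒜 ∧ ∀ m ∈ 𝒜, m ≤ d → d ≤ m } with hD
  have hD𝒜 : D ⊆ 𝒜 := fun d hd => hd.1
  have hbelow : ∀ m ∈ 𝒜, ∃ d ∈ D, d ≤ m := by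
    intro m hm
    have hTwf : {m' | m' ∈ 𝒜 ∧ m' ≤ m}.IsWF :=
      Set.WellFoundedOn.subset h𝒜P.isWF (fun x hx => hx.1)
    have hTne : {m' | m' ∈ 𝒜 ∧ m' ≤ m}.Nonempty := ⟨m, hm, le_rfl⟩
    refine ⟨hTwf.min hTne, ⟨(hTwf.min_mem hTne).1, ?_⟩, (hTwf.min_mem hTne).2⟩
    intro m' hm' hle
    by_contra hnle
    exact hTwf.not_lt_min hTne ⟨hm', le_trans hle (hTwf.min_mem hTne).2⟩
      (lt_of_le_not_ge hle hnle)
  have hDfin : D.Finite := by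
    have hanti : IsAntichain (· ≤ ·) D := by
      intro d hd d' hd' hne hle
      exact hne (le_antisymm hle (hd'.2 d hd.1 hle))
    exact hanti.finite_of_partiallyWellOrderedOn (h𝒜P.mono hD𝒜)
  have hDne : D.Nonempty := by
    obtain ⟨m, hm⟩ := h𝒜ne
    obtain ⟨d, hd, -⟩ := hbelow m hm
    exact ⟨d, hd⟩
  have hleast : ∀ t : ℝ, a < t →
      IsLeast ((fun d => sigE d t ^ (1/t)) '' D) (metricVersion φ t α) := by
    intro t ht
    have ht0 : 0 < t := lt_of_le_of_lt ha ht
    obtain ⟨d₀, hd₀D, hmin⟩ := Set.exists_min_image D (fun d => sigE d t ^ (1/t)) hDfin hDne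
    have hglbt := hglb t ht
    have hlb : ∀ m ∈ 𝒜, sigE d₀ t ^ (1/t) ≤ sigE m t ^ (1/t) := by
      intro m hm
      obtain ⟨d, hdD, hdm⟩ := hbelow m hm
      refine le_trans (hmin d hdD) ?_
      exact Real.rpow_le_rpow (sigE_nonneg (hsupp_pos d (hD𝒜 hdD)))
        (sigE_mono (hsupp_pos m hm) hdm) (one_div_nonneg.mpr ht0.le)
    have h2 : sigE d₀ t ^ (1/t) ≤ metricVersion φ t α :=
      hglbt.2 (by rintro x ⟨m, hm, rfl⟩; exact hlb m hm)
    have h3 : metricVersion φ t α ≤ sigE d₀ t ^ (1/t) :=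
      hglbt.1 ⟨d₀, hD𝒜 hd₀D, rfl⟩
    have heq : metricVersion φ t α = sigE d₀ t ^ (1/t) := le_antisymm h3 h2
    exact ⟨⟨d₀, hd₀D, heq.symm⟩, by
      rintro x ⟨d, hdD, rfl⟩; exact hglbt.1 ⟨d, hD𝒜 hdD, rfl⟩⟩
  -- pairwise eventual comparison
  have hpair : ∀ p : (ℝ →₀ ℕ) × (ℝ →₀ ℕ), ∃ s : ℝ, p.1 ∈ D → p.2 ∈ D →
      ((∀ t : ℝ, s < t → sigE p.1 t ≤ sigE p.2 t) ∨
       (∀ t : ℝ, s < t → sigE p.2 t < sigE p.1 t)) := by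
    rintro ⟨d, d'⟩
    by_cases hdd : d ∈ D ∧ d' ∈ D
    · obtain ⟨hdD, hd'D⟩ := hdd
      have hEpos : ∀ c ∈ d.support ∪ d'.support, 0 < c := by
        intro c hc
        rcases Finset.mem_union.mp hc with h | h
        · exact (hsupp d (hD𝒜 hdD) c h).1
        · exact (hsupp d' (hD𝒜 hd'D) c h).1
      obtain ⟨s, hs⟩ := expsum_eventual_sign (d.support ∪ d'.support) hEpos
        (fun c => (d' c : ℤ) - (d c : ℤ))
      have hdiff : ∀ t : ℝ, ∑ c ∈ d.support ∪ d'.support,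
          (((d' c : ℤ) - (d c : ℤ) : ℤ) : ℝ) * c ^ t = sigE d' t - sigE d t := by
        intro t
        have e1 : sigE d t = ∑ c ∈ d.support ∪ d'.support, (d c : ℝ) * c ^ t :=
          Finset.sum_subset Finset.subset_union_left (fun c _ hc => by
            rw [Finsupp.notMem_support_iff.mp hc]; simp)
        have e2 : sigE d' t = ∑ c ∈ d.support ∪ d'.support, (d' c : ℝ) * c ^ t :=
          Finset.sum_subset Finset.subset_union_right (fun c _ hc => by
            rw [Finsupp.notMem_support_iff.mp hc]; simp)
        rw [e1, e2, ← Finset.sum_sub_distrib]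
        exact Finset.sum_congr rfl fun c hc => by push_cast; ring
      refine ⟨s, fun _ _ => ?_⟩
      rcases hs with h | h | h
      · exact Or.inl fun t ht => by have h2 := h t ht; rw [hdiff t] at h2; linarith
      · exact Or.inr fun t ht => by have h2 := h t ht; rw [hdiff t] at h2; linarith
      · exact Or.inl fun t ht => by have h2 := h t ht; rw [hdiff t] at h2; linarith
    · exact ⟨0, fun h1 h2 => absurd ⟨h1, h2⟩ hdd⟩
  choose sfun hsfun using hpair
  obtain ⟨s₀, hs₀⟩ := (((hDfin.prod hDfin).image sfun).insert a).bddAbove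
  have ha_le : a ≤ s₀ := hs₀ (Set.mem_insert a _)
  have hsfle : ∀ d ∈ D, ∀ d' ∈ D, sfun (d, d') ≤ s₀ := fun d hd d' hd' =>
    hs₀ (Set.mem_insert_of_mem a ⟨(d, d'), Set.mk_mem_prod hd hd', rfl⟩)
  obtain ⟨dstar, hdstarD, hdstarmin⟩ := Set.exists_min_image D
    (fun d => sigE d (s₀+1)) hDfin hDne
  have hstar : ∀ d ∈ D, ∀ t : ℝ, s₀ < t → sigE dstar t ≤ sigE d t := by
    intro d hdD t ht
    rcases hsfun (dstar, d) hdstarD hdD with h | h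
    · exact h t (lt_of_le_of_lt (hsfle dstar hdstarD d hdD) ht)
    · have hc := h (s₀+1) (lt_of_le_of_lt (hsfle dstar hdstarD d hdD) (by linarith))
      exact absurd (hdstarmin d hdD) (by simp only [not_le]; linarith)
  have hfinal : ∀ t : ℝ, s₀ < t → metricVersion φ t α = sigE dstar t ^ (1/t) := by
    intro t ht
    have hta : a < t := lt_of_le_of_lt ha_le ht
    have ht0 : 0 < t := lt_of_le_of_lt ha hta
    have hl := hleast t hta
    refine le_antisymm (hl.2 ⟨dstar, hdstarD, rfl⟩) ?_
    obtain ⟨d, hdD, hx⟩ := hl.1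
    rw [← hx]
    exact Real.rpow_le_rpow (sigE_nonneg (hsupp_pos dstar (hD𝒜 hdstarD)))
      (hstar d hdD t ht) (one_div_nonneg.mpr ht0.le)
  obtain ⟨Ns, fs, hfsS, hprods, hdeq⟩ := hD𝒜 hdstarD
  refine ⟨⟨s₀, ha_le, Ns, fs, hfsS, hprods, fun t ht => ?_⟩, ?_, ?_⟩
  · have ht' : s₀ < t := Set.mem_Ioi.mp ht
    have htne : t ≠ 0 := ne_of_gt (lt_of_le_of_lt ha (lt_of_le_of_lt ha_le ht'))
    rw [hfinal t ht', hdeq, sigE_mOf φ fs htne]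
  · refine ⟨xOf φ fs, s₀, ha_le, fun t ht => ?_⟩
    have ht' : s₀ < t := Set.mem_Ioi.mp ht
    have htne : t ≠ 0 := ne_of_gt (lt_of_le_of_lt ha (lt_of_le_of_lt ha_le ht'))
    rw [hfinal t ht', hdeq, sigE_mOf φ fs htne, ltNorm_xOf φ hφ0 fs htne]
  · have hwit : ∀ d : ℝ →₀ ℕ, ∃ x : ℕ →₀ ℝ, d ∈ D →
        ∀ t : ℝ, 0 < t → ltNorm x t = sigE d t ^ (1/t) := by
      intro d
      by_cases hd : d ∈ D
      · obtain ⟨N, f, hfS, hprod, hdeq'⟩ := hD𝒜 hd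
        refine ⟨xOf φ f, fun _ t ht => ?_⟩
        rw [ltNorm_xOf φ hφ0 f (ne_of_gt ht), hdeq', sigE_mOf φ f (ne_of_gt ht)]
      · exact ⟨0, fun h => absurd h hd⟩
    choose xfun hxfun using hwit
    refine ⟨xfun '' D, hDfin.image xfun, fun t ht => ?_⟩
    have hta : a < t := Set.mem_Ioi.mp ht
    have himg : (fun x => ltNorm x t) '' (xfun '' D)
        = (fun d => sigE d t ^ (1/t)) '' D := by
      rw [Set.image_image]
      exact Set.image_congr fun d hd => hxfun d hd t (lt_of_le_of_lt ha hta)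
    rw [himg]
    exact hleast t hta
end
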